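/- arXiv:0811.3517 — 6 statements merged into one kernel-verified Lean document; each statement's English description precedes it below -/
import Mathlib

section
/- Let R̄ = R/(t_1^{m+1},...,t_r^{m+1}). The induced differential on K_r(m) ⊗_R R̄ vanishes, and the cohomology H(K_r(0) ⊗_R R̄) is the exterior algebra over k generated by the r classes [t_1^m s_1^0],...,[t_r^m s_r^0]; the map induced in cohomology with R̄-coefficients by the standard map ι sends t_i to [t_i^m s_i^0] and sends s_1^m∧...∧s_r^m to the nonzero class [t_1^m ⋯ t_r^m s_1^0∧...∧s_r^0]. -/
set_option synthInstance.maxHeartbeats 1000000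
set_option maxHeartbeats 1000000

/-!
Statement 3: let `R̄ = R/(t₁^{m+1},…,t_r^{m+1})`.  The differential induced on
`K_r(m) ⊗_R R̄` vanishes, and `H(K_r(0) ⊗_R R̄)` is the exterior algebra over `k` generated
by the `r` classes `[tᵢ^m sᵢ^0]`: the classes of the cycles `z_S := (∏_{i∈S} tᵢ^m)·e_S`
(`S ⊆ {1,…,r}`), which are the products of those generators, form a `k`-basis of the
cohomology, and they multiply by the exterior-algebra rule.  The map induced in cohomology
with `R̄`-coefficients by the standard map `ι` sends (the class of) `sᵢ^m` to `[tᵢ^m sᵢ^0]`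
and sends `s₁^m∧…∧s_r^m` to the nonzero class `[t₁^m⋯t_r^m s₁^0∧…∧s_r^0]`.
The complexes `K_r(m) ⊗_R R̄` are modelled as `Finset (Fin r) → R̄` with the reduced
Koszul differential, as in Statement 0.
-/

open MvPolynomial

variable (k : Type*) [Field k] (r m : ℕ)

/-- The ideal `(t₁^{m+1},…,t_r^{m+1})` of `R = k[t₁,…,t_r]`. -/
noncomputable def Jdl : Ideal (MvPolynomial (Fin r) k) :=
  Ideal.span (Set.range fun i : Fin r => X i ^ (m + 1))

/-- `R̄ = R/(t₁^{m+1},…,t_r^{m+1})`. -/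
abbrev Rbar := MvPolynomial (Fin r) k ⧸ Jdl k r m

/-- The differential induced on `K_r(m') ⊗_R R̄` (for the Koszul complex with
`d(sᵢ) = tᵢ^{m'+1}`), modelled on `Finset (Fin r) → R̄`. -/
noncomputable def koszulDbar (m' : ℕ) :
    (Finset (Fin r) → Rbar k r m) →ₗ[Rbar k r m] (Finset (Fin r) → Rbar k r m) :=
  LinearMap.pi fun S => ∑ i ∈ Sᶜ,
    (Ideal.Quotient.mk (Jdl k r m)
        (((-1 : MvPolynomial (Fin r) k) ^ (S.filter (fun j => j < i)).card) * X i ^ (m' + 1))) •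
      (LinearMap.proj (insert i S) :
        (Finset (Fin r) → Rbar k r m) →ₗ[Rbar k r m] Rbar k r m)

/-- The cycle `z_S = (∏_{i∈S} tᵢ^m)·e_S` in `K_r(0) ⊗_R R̄`, representing the product of the
classes `[tᵢ^m sᵢ^0]`, `i ∈ S`. -/
noncomputable def zb (S : Finset (Fin r)) : Finset (Fin r) → Rbar k r m :=
  Pi.single S (Ideal.Quotient.mk (Jdl k r m) (∏ i ∈ S, X i ^ m))

/-- The exterior (wedge) product on `Finset (Fin r) → R̄`. -/
noncomputable def kMulBar (f g : Finset (Fin r) → Rbar k r m) : Finset (Fin r) → Rbar k r m :=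
  fun U => ∑ S ∈ U.powerset,
    ((-1 : Rbar k r m) ^ (∑ i ∈ S, (((U \ S)).filter (fun j => j < i)).card)) *
      (f S * g (U \ S))

/-- The map `ι ⊗_R R̄ : K_r(m) ⊗_R R̄ → K_r(0) ⊗_R R̄` induced by the standard map `ι`
(`ι(e_S) = (∏_{i∈S} tᵢ^m)·e_S`). -/
noncomputable def kIotaBar :
    (Finset (Fin r) → Rbar k r m) →ₗ[Rbar k r m] (Finset (Fin r) → Rbar k r m) :=
  LinearMap.pi fun S =>
    (Ideal.Quotient.mk (Jdl k r m) (∏ i ∈ S, X i ^ m)) •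
      (LinearMap.proj S : (Finset (Fin r) → Rbar k r m) →ₗ[Rbar k r m] Rbar k r m)

namespace St3

variable {k r m}

/-- number of elements of S less than i -/
def cnt (S : Finset (Fin r)) (i : Fin r) : ℕ := (S.filter (fun j => j < i)).card

/-- exponent vector of the monomial ∏_{i∈S} t_i^m -/
noncomputable def mexp (m : ℕ) (S : Finset (Fin r)) : Fin r →₀ ℕ :=
  ∑ i ∈ S, Finsupp.single i m

lemma mexp_apply (S : Finset (Fin r)) (j : Fin r) :
    mexp m S j = if j ∈ S then m else 0 := by
  classical
  simp only [mexp, Finsupp.finset_sum_apply, Finsupp.single_apply]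
  by_cases hj : j ∈ S
  · rw [Finset.sum_eq_single j (fun i _ hij => by simp [hij]) (fun h => absurd hj h)]
    simp [hj]
  · rw [Finset.sum_eq_zero (fun i hi => by
      have : i ≠ j := fun h => hj (h ▸ hi)
      simp [this])]
    simp [hj]

lemma prod_X_pow_eq (S : Finset (Fin r)) :
    (∏ i ∈ S, (X i : MvPolynomial (Fin r) k) ^ m) = monomial (mexp m S) 1 := by
  classical
  induction S using Finset.induction_on with
  | empty => simp [mexp]
  | @insert a s h ih =>
    rw [Finset.prod_insert h, ih, X_pow_eq_monomial, monomial_mul, one_mul]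
    congr 1
    simp [mexp, Finset.sum_insert h]

/-- low exponent vector -/
def low (m : ℕ) (a : Fin r →₀ ℕ) : Prop := ∀ i, a i ≤ m

lemma coeff_eq_zero_of_mem_Jdl {p : MvPolynomial (Fin r) k} (hp : p ∈ Jdl k r m)
    {a : Fin r →₀ ℕ} (ha : low m a) : coeff a p = 0 := by
  classical
  -- the set of polynomials with all low coefficients zero is an ideal containing generators
  let M : Ideal (MvPolynomial (Fin r) k) :=
    { carrier := {p | ∀ b : Fin r →₀ ℕ, low m b → coeff b p = 0}
      add_mem' := fun hp hq b hb => by simp [coeff_add, hp b hb, hq b hb]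
      zero_mem' := fun b _ => by simp
      smul_mem' := fun c p hp b hb => by
        simp only [smul_eq_mul, Set.mem_setOf_eq] at *
        rw [coeff_mul]
        apply Finset.sum_eq_zero
        rintro ⟨u, v⟩ huv
        have heq : u + v = b := Finset.HasAntidiagonal.mem_antidiagonal.mp huv
        have : low m v := fun i => by
          have : u i + v i = b i := by rw [← heq]; simp
          have := hb i; omega
        simp [hp v this] }
  have hJ : Jdl k r m ≤ M := by
    rw [Jdl, Ideal.span_le]
    rintro q ⟨i, rfl⟩
    intro b hb
    show coeff b (X i ^ (m+1)) = 0
    rw [X_pow_eq_monomial, coeff_monomial]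
    have hne : Finsupp.single i (m+1) ≠ b := by
      intro h
      have h2 := hb i
      rw [← h, Finsupp.single_apply, if_pos rfl] at h2
      omega
    rw [if_neg hne]
  exact hJ hp a ha


lemma monomial_mem_Jdl {a : Fin r →₀ ℕ} (c : k) (i : Fin r) (hi : m + 1 ≤ a i) :
    monomial a c ∈ Jdl k r m := by
  have ha : Finsupp.single i (m+1) + (a - Finsupp.single i (m+1)) = a := by
    ext j
    simp only [Finsupp.add_apply, Finsupp.tsub_apply, Finsupp.single_apply]
    by_cases hj : i = j
    · subst hj; rw [if_pos rfl]; omega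
    · simp [hj]
  have key : monomial a c = X i ^ (m+1) * monomial (a - Finsupp.single i (m+1)) c := by
    rw [X_pow_eq_monomial, monomial_mul, one_mul, ha]
  rw [key]
  exact Ideal.mul_mem_right _ _ (Ideal.subset_span ⟨i, rfl⟩)

lemma mem_Jdl_of_high {p : MvPolynomial (Fin r) k}
    (h : ∀ a ∈ p.support, ¬ low m a) : p ∈ Jdl k r m := by
  classical
  rw [p.as_sum]
  apply Ideal.sum_mem
  intro a ha
  have := h a ha
  rw [low] at this
  push_neg at this
  obtain ⟨i, hi⟩ := this
  exact monomial_mem_Jdl _ i hi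

lemma exists_lowRep (x : Rbar k r m) :
    ∃ y : MvPolynomial (Fin r) k, (∀ a ∈ y.support, low m a) ∧
      Ideal.Quotient.mk (Jdl k r m) y = x := by
  classical
  obtain ⟨p, rfl⟩ := Ideal.Quotient.mk_surjective x
  refine ⟨∑ a ∈ p.support.filter (fun a => low m a), monomial a (coeff a p), ?_, ?_⟩
  · intro a ha
    have := MvPolynomial.support_sum ha
    simp only [Finset.mem_biUnion, Finset.mem_filter] at this
    obtain ⟨b, ⟨hb1, hb2⟩, hb3⟩ := this
    have := support_monomial_subset hb3
    rw [Finset.mem_singleton] at this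
    rwa [this]
  · rw [Ideal.Quotient.eq]
    have hsplit : (∑ a ∈ p.support.filter (fun a => low m a), monomial a (coeff a p))
        + (∑ a ∈ p.support.filter (fun a => ¬ low m a), monomial a (coeff a p)) = p := by
      rw [Finset.sum_filter_add_sum_filter_not]
      exact p.as_sum.symm
    have heq : (∑ a ∈ p.support.filter (fun a => low m a), monomial a (coeff a p)) - p
        = - ∑ a ∈ p.support.filter (fun a => ¬ low m a), monomial a (coeff a p) := by
      linear_combination hsplit
    rw [heq]
    apply Submodule.neg_mem
    apply Ideal.sum_mem
    intro a ha
    rw [Finset.mem_filter] at ha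
    rw [low] at ha
    have := ha.2
    push_neg at this
    obtain ⟨i, hi⟩ := this
    exact monomial_mem_Jdl _ i hi

lemma mk_smul (c : k) (p : MvPolynomial (Fin r) k) :
    Ideal.Quotient.mk (Jdl k r m) (c • p) = c • Ideal.Quotient.mk (Jdl k r m) p := by
  rfl

/-- polynomial-level Koszul differential (m' = 0) -/
noncomputable def Dpoly (f : Finset (Fin r) → MvPolynomial (Fin r) k) :
    Finset (Fin r) → MvPolynomial (Fin r) k :=
  fun S => ∑ i ∈ Sᶜ, ((-1 : MvPolynomial (Fin r) k) ^ (cnt S i)) * (X i * f (insert i S))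

lemma koszulDbar_apply (m' : ℕ) (x : Finset (Fin r) → Rbar k r m) (S : Finset (Fin r)) :
    koszulDbar k r m m' x S = ∑ i ∈ Sᶜ,
      (Ideal.Quotient.mk (Jdl k r m)
        (((-1 : MvPolynomial (Fin r) k) ^ (cnt S i)) * X i ^ (m' + 1))) * x (insert i S) := by
  simp only [koszulDbar, LinearMap.pi_apply, LinearMap.sum_apply, Finset.sum_apply,
    LinearMap.smul_apply, LinearMap.proj_apply, smul_eq_mul, cnt]

lemma koszulDbar_mk (f : Finset (Fin r) → MvPolynomial (Fin r) k) (S : Finset (Fin r)) :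
    koszulDbar k r m 0 (fun S => Ideal.Quotient.mk (Jdl k r m) (f S)) S =
      Ideal.Quotient.mk (Jdl k r m) (Dpoly f S) := by
  rw [koszulDbar_apply, Dpoly, map_sum]
  apply Finset.sum_congr rfl
  intro i _
  rw [← map_mul]
  congr 1
  rw [pow_one]
  ring

lemma part_i : koszulDbar k r m m = 0 := by
  apply LinearMap.ext
  intro x
  funext S
  rw [koszulDbar_apply]
  show _ = (0 : Finset (Fin r) → Rbar k r m) S
  rw [Pi.zero_apply]
  apply Finset.sum_eq_zero
  intro i _
  have h0 : Ideal.Quotient.mk (Jdl k r m) (X i ^ (m + 1) : MvPolynomial (Fin r) k) = 0 :=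
    Ideal.Quotient.eq_zero_iff_mem.mpr (Ideal.subset_span ⟨i, rfl⟩)
  rw [map_mul, h0, mul_zero, zero_mul]

lemma univ_filter_not_mem (S : Finset (Fin r)) :
    Sᶜ = Finset.univ.filter (fun i => i ∉ S) := by
  ext i; simp

lemma univ_filter_mem (U : Finset (Fin r)) :
    U = Finset.univ.filter (fun i => i ∈ U) := by
  ext i; simp

lemma sum_compl_eq {M : Type*} [AddCommMonoid M] (S : Finset (Fin r)) (g : Fin r → M) :
    ∑ i ∈ Sᶜ, g i = ∑ i ∈ Finset.univ, if i ∉ S then g i else 0 := by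
  rw [univ_filter_not_mem S, Finset.sum_filter]

lemma sum_mem_eq {M : Type*} [AddCommMonoid M] (U : Finset (Fin r)) (g : Fin r → M) :
    ∑ i ∈ U, g i = ∑ i ∈ Finset.univ, if i ∈ U then g i else 0 := by
  conv_lhs => rw [univ_filter_mem U]
  rw [Finset.sum_filter]

lemma Dpoly_single (U : Finset (Fin r)) (p : MvPolynomial (Fin r) k) :
    Dpoly (Pi.single U p) = ∑ j ∈ U,
      Pi.single (U.erase j)
        (((-1 : MvPolynomial (Fin r) k) ^ (cnt (U.erase j) j)) * (X j * p)) := by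
  classical
  funext S
  rw [Finset.sum_apply, Dpoly, sum_compl_eq, sum_mem_eq U]
  apply Finset.sum_congr rfl
  intro j _
  rw [Pi.single_apply, Pi.single_apply]
  by_cases h1 : j ∈ S
  · rw [if_neg (not_not_intro h1)]
    by_cases h2 : j ∈ U
    · rw [if_pos h2, if_neg ?_]
      intro hS
      exact (Finset.notMem_erase j U) (hS ▸ h1)
    · rw [if_neg h2]
  · rw [if_pos h1]
    by_cases h2 : insert j S = U
    · have hjU : j ∈ U := h2 ▸ Finset.mem_insert_self j S
      have hSU : S = U.erase j := by rw [← h2, Finset.erase_insert h1]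
      rw [if_pos h2, if_pos hjU, if_pos hSU, hSU]
    · rw [if_neg h2, mul_zero, mul_zero]
      by_cases h3 : j ∈ U
      · rw [if_pos h3, if_neg (fun hS => h2 (by rw [hS, Finset.insert_erase h3]))]
      · rw [if_neg h3]

lemma X_mul_monomial_one (i : Fin r) (a : Fin r →₀ ℕ) :
    (X i : MvPolynomial (Fin r) k) * monomial a 1 = monomial (Finsupp.single i 1 + a) 1 := by
  rw [← pow_one (X i : MvPolynomial (Fin r) k), X_pow_eq_monomial, monomial_mul, one_mul]

lemma part_ii (S : Finset (Fin r)) : koszulDbar k r m 0 (zb k r m S) = 0 := by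
  classical
  funext T
  rw [koszulDbar_apply]
  show _ = (0 : Finset (Fin r) → Rbar k r m) T
  rw [Pi.zero_apply]
  apply Finset.sum_eq_zero
  intro i hi
  rw [zb, Pi.single_apply]
  by_cases h : insert i T = S
  · rw [if_pos h]
    have hiS : i ∈ S := h ▸ Finset.mem_insert_self i T
    rw [prod_X_pow_eq, ← map_mul]
    apply Ideal.Quotient.eq_zero_iff_mem.mpr
    rw [mul_assoc]
    apply Ideal.mul_mem_left
    rw [pow_one, X_mul_monomial_one]
    apply monomial_mem_Jdl _ i
    rw [Finsupp.add_apply, Finsupp.single_apply, if_pos rfl, mexp_apply, if_pos hiS]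
    omega
  · rw [if_neg h, mul_zero]

lemma part_v (S T : Finset (Fin r)) (hST : Disjoint S T) :
    kMulBar k r m (zb k r m S) (zb k r m T) =
      ((-1 : Rbar k r m) ^ (∑ i ∈ S, (T.filter (fun j => j < i)).card)) •
        zb k r m (S ∪ T) := by
  classical
  funext U
  rw [kMulBar]
  by_cases hU : U = S ∪ T
  · subst hU
    rw [Finset.sum_eq_single S]
    · have hsd : (S ∪ T) \ S = T := Finset.union_sdiff_cancel_left hST
      rw [hsd]
      rw [zb, zb, Pi.single_eq_same, Pi.single_eq_same]
      rw [Pi.smul_apply, zb, Pi.single_eq_same]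
      rw [smul_eq_mul, ← map_mul, ← Finset.prod_union hST]
    · intro S' _ hS'
      rw [zb, Pi.single_apply, if_neg hS', zero_mul, mul_zero]
    · intro h
      exact absurd (Finset.mem_powerset.mpr Finset.subset_union_left) h
  · rw [Pi.smul_apply]
    conv_rhs => rw [zb, Pi.single_apply, if_neg hU]
    rw [smul_zero]
    apply Finset.sum_eq_zero
    intro S' hS'
    by_cases h1 : S' = S
    · subst h1
      have hsub : S' ⊆ U := Finset.mem_powerset.mp hS'
      have h2 : ¬ U \ S' = T := by
        intro h
        exact hU (by rw [← Finset.union_sdiff_of_subset hsub, h])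
      rw [show zb k r m T (U \ S') = 0 from by rw [zb, Pi.single_apply]; exact if_neg h2,
        mul_zero, mul_zero]
    · rw [show zb k r m S S' = 0 from by rw [zb, Pi.single_apply]; exact if_neg h1,
        zero_mul, mul_zero]

lemma kIotaBar_apply (x : Finset (Fin r) → Rbar k r m) (S : Finset (Fin r)) :
    kIotaBar k r m x S =
      (Ideal.Quotient.mk (Jdl k r m) (∏ i ∈ S, X i ^ m)) * x S := by
  simp only [kIotaBar, LinearMap.pi_apply, LinearMap.smul_apply, LinearMap.proj_apply,
    smul_eq_mul]

lemma part_vi (i : Fin r) :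
    kIotaBar k r m (Pi.single {i} 1) = zb k r m {i} := by
  classical
  funext S
  rw [kIotaBar_apply, zb, Pi.single_apply, Pi.single_apply]
  by_cases h : S = {i}
  · rw [if_pos h, if_pos h, mul_one, h]
  · rw [if_neg h, if_neg h, mul_zero]

lemma part_vii :
    kIotaBar k r m (Pi.single Finset.univ 1) = zb k r m Finset.univ := by
  classical
  funext S
  rw [kIotaBar_apply, zb, Pi.single_apply, Pi.single_apply]
  by_cases h : S = Finset.univ
  · rw [if_pos h, if_pos h, mul_one, h]
  · rw [if_neg h, if_neg h, mul_zero]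

lemma coeff_mexp_X_mul (S : Finset (Fin r)) (i : Fin r) (hi : i ∉ S)
    (q : MvPolynomial (Fin r) k) : coeff (mexp m S) (X i * q) = 0 := by
  classical
  rw [coeff_X_mul']
  rw [if_neg]
  rw [Finsupp.mem_support_iff]
  simp only [ne_eq, not_not]
  rw [mexp_apply, if_neg hi]

lemma part_iii (c : Finset (Fin r) → k)
    (h : (∑ S : Finset (Fin r), c S • zb k r m S) ∈ LinearMap.range (koszulDbar k r m 0)) :
    c = 0 := by
  classical
  obtain ⟨x, hx⟩ := h
  choose y hy using fun T => Ideal.Quotient.mk_surjective (x T)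
  funext S
  have hxy : x = fun T => Ideal.Quotient.mk (Jdl k r m) (y T) := funext fun T => (hy T).symm
  rw [hxy] at hx
  have hS := congrFun hx S
  rw [koszulDbar_mk] at hS
  have hR : (∑ T : Finset (Fin r), c T • zb k r m T) S =
      Ideal.Quotient.mk (Jdl k r m) (c S • (monomial (mexp m S) 1)) := by
    rw [Finset.sum_apply, Finset.sum_eq_single S]
    · rw [Pi.smul_apply, zb, Pi.single_eq_same, prod_X_pow_eq, mk_smul]
    · intro T _ hT
      rw [Pi.smul_apply, zb, Pi.single_apply, if_neg (Ne.symm hT), smul_zero]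
    · intro h; exact absurd (Finset.mem_univ S) h
  rw [hR] at hS
  have hmem : c S • (monomial (mexp m S) 1) - Dpoly y S ∈ Jdl k r m := by
    rw [← Ideal.Quotient.eq]
    exact hS.symm
  have hlow : low m (mexp m S) := fun i => by rw [mexp_apply]; split <;> omega
  have := coeff_eq_zero_of_mem_Jdl hmem hlow
  rw [coeff_sub] at this
  have hD : coeff (mexp m S) (Dpoly y S) = 0 := by
    rw [Dpoly]
    rw [coeff_sum]
    apply Finset.sum_eq_zero
    intro i hi
    have hiS : i ∉ S := by simpa using hi
    rw [mul_left_comm]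
    exact coeff_mexp_X_mul S i hiS _
  rw [hD, sub_zero, coeff_smul, coeff_monomial, if_pos rfl, smul_eq_mul, mul_one] at this
  exact this

lemma part_viii : zb k r m Finset.univ ∉ LinearMap.range (koszulDbar k r m 0) := by
  classical
  intro h
  have hsum : (∑ S : Finset (Fin r), (Pi.single Finset.univ (1:k) : Finset (Fin r) → k) S • zb k r m S)
      = zb k r m Finset.univ := by
    rw [Finset.sum_eq_single Finset.univ]
    · rw [Pi.single_eq_same, one_smul]
    · intro T _ hT
      rw [Pi.single_apply, if_neg hT, zero_smul]
    · intro hmem; exact absurd (Finset.mem_univ _) hmem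
  have := part_iii (k := k) (r := r) (m := m) (Pi.single Finset.univ 1) (by rw [hsum]; exact h)
  have h1 := congrFun this Finset.univ
  rw [Pi.single_eq_same, Pi.zero_apply] at h1
  exact one_ne_zero h1

/-- set of non-harmonic coordinates of the monomial `t^a e_T` -/
def nonHarm (m : ℕ) (T : Finset (Fin r)) (a : Fin r →₀ ℕ) : Finset (Fin r) :=
  Finset.univ.filter (fun j => ¬ (if j ∈ T then a j = m else a j = 0))

lemma mem_nonHarm {T : Finset (Fin r)} {a : Fin r →₀ ℕ} {j : Fin r} :
    j ∈ nonHarm m T a ↔ ¬ (if j ∈ T then a j = m else a j = 0) := by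
  simp [nonHarm]

instance lowDec (m : ℕ) (a : Fin r →₀ ℕ) : Decidable (low m a) := by
  unfold low; infer_instance

/-- value of the contracting homotopy on the monomial `t^a e_T` -/
noncomputable def Hmon (m : ℕ) (T : Finset (Fin r)) (a : Fin r →₀ ℕ) :
    Finset (Fin r) → MvPolynomial (Fin r) k :=
  if h : (nonHarm m T a).Nonempty ∧ low m a then
    if (nonHarm m T a).min' h.1 ∈ T then 0
    else Pi.single (insert ((nonHarm m T a).min' h.1) T)
      (((-1 : MvPolynomial (Fin r) k) ^ (cnt T ((nonHarm m T a).min' h.1))) *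
        monomial (a - Finsupp.single ((nonHarm m T a).min' h.1) 1) 1)
  else 0

lemma Hmon_not_low {T : Finset (Fin r)} {a : Fin r →₀ ℕ} (h : ¬ low m a) :
    Hmon (k := k) m T a = 0 := by
  rw [Hmon, dif_neg (fun hc => h hc.2)]

lemma Hmon_of_empty {T : Finset (Fin r)} {a : Fin r →₀ ℕ} (h : ¬ (nonHarm m T a).Nonempty) :
    Hmon (k := k) m T a = 0 := by
  rw [Hmon, dif_neg (fun hc => h hc.1)]

lemma nonHarm_min'_eq {T : Finset (Fin r)} {a : Fin r →₀ ℕ} {i : Fin r}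
    (hmem : i ∈ nonHarm m T a) (hbelow : ∀ l, l < i → l ∉ nonHarm m T a)
    (h : (nonHarm m T a).Nonempty) : (nonHarm m T a).min' h = i :=
  le_antisymm (Finset.min'_le _ _ hmem)
    (Finset.le_min' _ _ _ fun l hl => not_lt.mp (fun hlt => hbelow l hlt hl))

lemma Hmon_active {T : Finset (Fin r)} {a : Fin r →₀ ℕ} {i : Fin r}
    (hmem : i ∈ nonHarm m T a) (hbelow : ∀ l, l < i → l ∉ nonHarm m T a)
    (hlow : low m a) (hiT : i ∉ T) :
    Hmon (k := k) m T a = Pi.single (insert i T)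
      (((-1 : MvPolynomial (Fin r) k) ^ (cnt T i)) *
        monomial (a - Finsupp.single i 1) 1) := by
  have hne : (nonHarm m T a).Nonempty := ⟨i, hmem⟩
  rw [Hmon, dif_pos ⟨hne, hlow⟩]
  have hmin : (nonHarm m T a).min' hne = i := nonHarm_min'_eq hmem hbelow hne
  rw [show (nonHarm m T a).min' (And.intro hne hlow).1 = i from hmin, if_neg hiT]

lemma Hmon_inactive {T : Finset (Fin r)} {a : Fin r →₀ ℕ} {i : Fin r}
    (hmem : i ∈ nonHarm m T a) (hbelow : ∀ l, l < i → l ∉ nonHarm m T a)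
    (hiT : i ∈ T) : Hmon (k := k) m T a = 0 := by
  by_cases hlow : low m a
  · have hne : (nonHarm m T a).Nonempty := ⟨i, hmem⟩
    rw [Hmon, dif_pos ⟨hne, hlow⟩]
    have hmin : (nonHarm m T a).min' hne = i := nonHarm_min'_eq hmem hbelow hne
    rw [show (nonHarm m T a).min' (And.intro hne hlow).1 = i from hmin, if_pos hiT]
  · exact Hmon_not_low hlow

/-- contracting homotopy -/
noncomputable def Hop (m : ℕ) (g : Finset (Fin r) → MvPolynomial (Fin r) k) :
    Finset (Fin r) → MvPolynomial (Fin r) k :=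
  fun S' => ∑ T : Finset (Fin r), ∑ a ∈ (g T).support, coeff a (g T) • Hmon m T a S'

lemma sum_support_smul {M : Type*} [AddCommMonoid M] [Module k M]
    (p : MvPolynomial (Fin r) k) (v : (Fin r →₀ ℕ) → M) (u : Finset (Fin r →₀ ℕ))
    (hu : p.support ⊆ u) :
    ∑ a ∈ p.support, coeff a p • v a = ∑ a ∈ u, coeff a p • v a := by
  apply Finset.sum_subset hu
  intro a _ ha
  rw [MvPolynomial.notMem_support_iff.mp ha, zero_smul]

lemma Hop_add (g1 g2 : Finset (Fin r) → MvPolynomial (Fin r) k) :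
    Hop (k := k) m (g1 + g2) = Hop m g1 + Hop m g2 := by
  funext S'
  rw [Pi.add_apply, Hop, Hop, Hop, ← Finset.sum_add_distrib]
  apply Finset.sum_congr rfl
  intro T _
  rw [Pi.add_apply]
  rw [sum_support_smul (g1 T + g2 T) _ ((g1 T).support ∪ (g2 T).support)
      MvPolynomial.support_add,
    sum_support_smul (g1 T) _ ((g1 T).support ∪ (g2 T).support) Finset.subset_union_left,
    sum_support_smul (g2 T) _ ((g1 T).support ∪ (g2 T).support) Finset.subset_union_right,
    ← Finset.sum_add_distrib]
  apply Finset.sum_congr rfl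
  intro a _
  rw [coeff_add, add_smul]

lemma Hop_zero : Hop (k := k) (r := r) m 0 = 0 := by
  funext S'
  rw [Hop]
  rw [Pi.zero_apply]
  apply Finset.sum_eq_zero
  intro T _
  rw [Pi.zero_apply]
  simp

lemma Hop_smul (c : k) (g : Finset (Fin r) → MvPolynomial (Fin r) k) :
    Hop (k := k) m (c • g) = c • Hop m g := by
  funext S'
  rw [Pi.smul_apply, Hop, Hop, Finset.smul_sum]
  apply Finset.sum_congr rfl
  intro T _
  rw [Pi.smul_apply]
  rw [sum_support_smul (c • g T) _ ((g T).support) (MvPolynomial.support_smul),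
    Finset.smul_sum]
  apply Finset.sum_congr rfl
  intro a _
  rw [MvPolynomial.coeff_smul, smul_assoc]

lemma Hop_sum {ι : Type*} (s : Finset ι) (f : ι → Finset (Fin r) → MvPolynomial (Fin r) k) :
    Hop (k := k) m (∑ j ∈ s, f j) = ∑ j ∈ s, Hop m (f j) := by
  classical
  induction s using Finset.cons_induction with
  | empty => simpa using Hop_zero (k := k) (r := r) (m := m)
  | cons j s hj ih => rw [Finset.sum_cons, Hop_add, ih, Finset.sum_cons]

lemma Hop_single_monomial (U : Finset (Fin r)) (b : Fin r →₀ ℕ) (c : k) :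
    Hop (k := k) m (Pi.single U (monomial b c)) = c • Hmon m U b := by
  classical
  funext S'
  rw [Hop, Pi.smul_apply, Finset.sum_eq_single U]
  · by_cases hc : c = 0
    · simp [hc]
    · rw [Pi.single_eq_same, support_monomial, if_neg hc]
      rw [Finset.sum_singleton, coeff_monomial, if_pos rfl]
  · intro T _ hT
    rw [Pi.single_apply, if_neg hT]
    simp
  · intro hmem; exact absurd (Finset.mem_univ _) hmem

lemma Hop_jdl (g : Finset (Fin r) → MvPolynomial (Fin r) k)
    (hg : ∀ T, g T ∈ Jdl k r m) : Hop (k := k) m g = 0 := by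
  funext S'
  rw [Hop]
  apply Finset.sum_eq_zero
  intro T _
  apply Finset.sum_eq_zero
  intro a ha
  by_cases hlow : low m a
  · have := coeff_eq_zero_of_mem_Jdl (hg T) hlow
    rw [this, zero_smul]
  · rw [Hmon_not_low hlow]
    simp

lemma Dpoly_jdl (g : Finset (Fin r) → MvPolynomial (Fin r) k)
    (hg : ∀ T, g T ∈ Jdl k r m) (S : Finset (Fin r)) : Dpoly g S ∈ Jdl k r m := by
  rw [Dpoly]
  apply Ideal.sum_mem
  intro i _
  exact Ideal.mul_mem_left _ _ (Ideal.mul_mem_left _ _ (hg _))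

lemma cnt_insert_of_lt {i j : Fin r} {s : Finset (Fin r)} (his : i ∉ s) (hij : i < j) :
    cnt (insert i s) j = cnt s j + 1 := by
  classical
  rw [cnt, cnt, Finset.filter_insert, if_pos hij, Finset.card_insert_of_notMem]
  intro hmem
  exact his (Finset.mem_filter.mp hmem).1

lemma cnt_erase_of_lt {i j : Fin r} {s : Finset (Fin r)} (hij : i < j) :
    cnt (s.erase j) i = cnt s i := by
  classical
  rw [cnt, cnt]
  congr 1
  ext l
  simp only [Finset.mem_filter, Finset.mem_erase]
  constructor
  · rintro ⟨⟨_, h1⟩, h2⟩; exact ⟨h1, h2⟩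
  · rintro ⟨h1, h2⟩; exact ⟨⟨by intro h; subst h; exact absurd (h2.trans hij) (lt_irrefl l), h1⟩, h2⟩

lemma X_mul_monomial' (i : Fin r) (b : Fin r →₀ ℕ) (c : k) :
    (X i : MvPolynomial (Fin r) k) * monomial b c = monomial (Finsupp.single i 1 + b) c := by
  rw [← pow_one (X i : MvPolynomial (Fin r) k), X_pow_eq_monomial, monomial_mul, one_mul]

lemma single_add_sub {a : Fin r →₀ ℕ} {i : Fin r} (h : a i ≠ 0) :
    Finsupp.single i 1 + (a - Finsupp.single i 1) = a := by
  ext l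
  by_cases h1 : i = l
  · subst h1
    simp only [Finsupp.add_apply, Finsupp.tsub_apply, Finsupp.single_apply,
      eq_self_iff_true, if_true]
    omega
  · simp only [Finsupp.add_apply, Finsupp.tsub_apply, Finsupp.single_apply, if_neg h1]
    omega

lemma single_add_sub_comm {a : Fin r →₀ ℕ} {i j : Fin r} (hij : i ≠ j) (h : a i ≠ 0) :
    Finsupp.single j 1 + (a - Finsupp.single i 1)
      = Finsupp.single j 1 + a - Finsupp.single i 1 := by
  ext l
  by_cases h1 : i = l
  · subst h1
    simp only [Finsupp.add_apply, Finsupp.tsub_apply, Finsupp.single_apply,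
      eq_self_iff_true, if_true]
    split_ifs <;> omega
  · simp only [Finsupp.add_apply, Finsupp.tsub_apply, Finsupp.single_apply, if_neg h1]
    split_ifs <;> omega

lemma not_nonHarm_transfer {T T' : Finset (Fin r)} {a a' : Fin r →₀ ℕ} {l : Fin r}
    (hmem : l ∈ T' ↔ l ∈ T) (hval : a' l = a l) (h : l ∉ nonHarm m T a) :
    l ∉ nonHarm m T' a' := by
  simp only [mem_nonHarm, not_not] at h ⊢
  rw [hval]
  by_cases hl : l ∈ T'
  · rw [if_pos hl]; rwa [if_pos (hmem.mp hl)] at h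
  · rw [if_neg hl]; rwa [if_neg (fun hc => hl (hmem.mpr hc))] at h

lemma Dpoly_single_monomial (T : Finset (Fin r)) (a : Fin r →₀ ℕ) :
    Dpoly (Pi.single T (monomial a (1:k))) = ∑ j ∈ T,
      Pi.single (T.erase j)
        (monomial (Finsupp.single j 1 + a) ((-1:k) ^ (cnt (T.erase j) j))) := by
  rw [Dpoly_single]
  apply Finset.sum_congr rfl
  intro j _
  congr 1
  rw [X_mul_monomial']
  have hC : ((-1 : MvPolynomial (Fin r) k) ^ (cnt (T.erase j) j))
      = C ((-1:k) ^ (cnt (T.erase j) j)) := by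
    rw [map_pow, map_neg, map_one]
  rw [hC, C_mul_monomial, mul_one]

lemma neg_one_pow_mul_self (c : ℕ) (p : MvPolynomial (Fin r) k) :
    ((-1 : MvPolynomial (Fin r) k) ^ c) * (((-1 : MvPolynomial (Fin r) k) ^ c) * p) = p := by
  rw [← mul_assoc, ← pow_add, Even.neg_one_pow ⟨c, rfl⟩, one_mul]

noncomputable def bas (T : Finset (Fin r)) (a : Fin r →₀ ℕ) :
    Finset (Fin r) → MvPolynomial (Fin r) k :=
  Pi.single T (monomial a 1)

lemma keymon (T : Finset (Fin r)) (a : Fin r →₀ ℕ) (ha : low m a) (S : Finset (Fin r)) :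
    bas (k := k) T a S
      - (if a = mexp m T then bas (k := k) T a S else 0)
      - Dpoly (Hmon (k := k) m T a) S
      - Hop m (Dpoly (bas (k := k) T a)) S ∈ Jdl k r m := by
  classical
  unfold bas
  have hHD : Hop m (Dpoly (Pi.single T (monomial a (1:k)))) =
      ∑ j ∈ T, ((-1:k) ^ (cnt (T.erase j) j)) •
        Hmon (k := k) m (T.erase j) (Finsupp.single j 1 + a) := by
    rw [Dpoly_single_monomial, Hop_sum]
    apply Finset.sum_congr rfl
    intro j _
    rw [Hop_single_monomial]
  by_cases hNH : (nonHarm m T a).Nonempty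
  · -- there is a nonharmonic coordinate
    set i := (nonHarm m T a).min' hNH with hidef
    have himem : i ∈ nonHarm m T a := Finset.min'_mem _ _
    have hbelow : ∀ l, l < i → l ∉ nonHarm m T a := fun l hl hmem =>
      absurd (Finset.min'_le _ _ hmem) (not_le.mpr hl)
    have hnmexp : ¬ a = mexp m T := by
      intro h
      apply mem_nonHarm.mp himem
      rw [h, mexp_apply]
      by_cases hiT : i ∈ T
      · rw [if_pos hiT, if_pos hiT]
      · rw [if_neg hiT, if_neg hiT]
    rw [if_neg hnmexp, hHD, Finset.sum_apply]
    by_cases hiT : i ∈ T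
    · -- least nonharmonic coordinate belongs to T
      have haim : a i ≠ m := by
        have := mem_nonHarm.mp himem; rwa [if_pos hiT] at this
      rw [Hmon_inactive himem hbelow hiT]
      have hz : Dpoly (0 : Finset (Fin r) → MvPolynomial (Fin r) k) S = 0 := by
        simp [Dpoly]
      rw [hz]
      have hmain : ∀ j ∈ T, j ≠ i →
          (((-1:k) ^ (cnt (T.erase j) j)) •
            Hmon (k := k) m (T.erase j) (Finsupp.single j 1 + a)) S = 0 := by
        intro j hj hji
        by_cases haj : a j = m
        · rw [Hmon_not_low (fun hlow => by
            have h1 := hlow j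
            rw [Finsupp.add_apply, Finsupp.single_apply, if_pos rfl, haj] at h1
            omega)]
          simp
        · have hjNH : j ∈ nonHarm m T a := mem_nonHarm.mpr (by rw [if_pos hj]; exact haj)
          have hij : i < j := lt_of_le_of_ne (Finset.min'_le _ _ hjNH) (Ne.symm hji)
          have hmem' : i ∈ nonHarm m (T.erase j) (Finsupp.single j 1 + a) := by
            rw [mem_nonHarm, if_pos (Finset.mem_erase.mpr ⟨Ne.symm hji, hiT⟩)]
            rw [Finsupp.add_apply, Finsupp.single_apply, if_neg hji]
            simpa using haim
          have hbelow' : ∀ l, l < i → l ∉ nonHarm m (T.erase j) (Finsupp.single j 1 + a) := by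
            intro l hl
            apply not_nonHarm_transfer _ _ (hbelow l hl)
            · constructor
              · intro hm; exact (Finset.mem_erase.mp hm).2
              · intro hm
                exact Finset.mem_erase.mpr
                  ⟨fun hc => by subst hc; exact absurd (hl.trans hij) (lt_irrefl l), hm⟩
            · rw [Finsupp.add_apply, Finsupp.single_apply,
                if_neg (fun hc => by subst hc; exact absurd (hl.trans hij) (lt_irrefl j)),
                zero_add]
          rw [Hmon_inactive hmem' hbelow' (Finset.mem_erase.mpr ⟨Ne.symm hji, hiT⟩)]
          simp
      rw [Finset.sum_eq_single i hmain (fun h => absurd hiT h)]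
      have hmem'' : i ∈ nonHarm m (T.erase i) (Finsupp.single i 1 + a) := by
        rw [mem_nonHarm, if_neg (Finset.notMem_erase i T)]
        rw [Finsupp.add_apply, Finsupp.single_apply, if_pos rfl]
        omega
      have hbelow'' : ∀ l, l < i → l ∉ nonHarm m (T.erase i) (Finsupp.single i 1 + a) := by
        intro l hl
        apply not_nonHarm_transfer _ _ (hbelow l hl)
        · constructor
          · intro hm; exact (Finset.mem_erase.mp hm).2
          · intro hm; exact Finset.mem_erase.mpr ⟨ne_of_lt hl, hm⟩
        · rw [Finsupp.add_apply, Finsupp.single_apply, if_neg (ne_of_gt hl), zero_add]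
      have hlow'' : low m (Finsupp.single i 1 + a) := by
        intro l
        rw [Finsupp.add_apply, Finsupp.single_apply]
        by_cases hl : i = l
        · subst hl; have := ha i; rw [if_pos rfl]; omega
        · rw [if_neg hl]; have := ha l; omega
      rw [Hmon_active hmem'' hbelow'' hlow'' (Finset.notMem_erase i T)]
      rw [Finset.insert_erase hiT, add_tsub_cancel_left]
      rw [Pi.smul_apply, Pi.single_apply, Pi.single_apply]
      by_cases hS : S = T
      · rw [if_pos hS, if_pos hS]
        have hval : ((-1:k) ^ (cnt (T.erase i) i)) •
            (((-1 : MvPolynomial (Fin r) k) ^ (cnt (T.erase i) i)) * monomial a 1)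
            = monomial a (1:k) := by
          rw [MvPolynomial.smul_eq_C_mul, map_pow, map_neg, map_one, neg_one_pow_mul_self]
        rw [hval]
        simpa using Ideal.zero_mem (Jdl k r m)
      · rw [if_neg hS, if_neg hS, smul_zero]
        simpa using Ideal.zero_mem (Jdl k r m)
    · -- least nonharmonic coordinate outside T : active case
      have hai0 : a i ≠ 0 := by
        have := mem_nonHarm.mp himem; rwa [if_neg hiT] at this
      rw [Hmon_active himem hbelow ha hiT]
      rw [Dpoly_single, Finset.sum_apply, Finset.sum_insert hiT]
      -- the j = i term equals the basis monomial
      have hterm_i : (Pi.single ((insert i T).erase i)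
          (((-1 : MvPolynomial (Fin r) k) ^ (cnt ((insert i T).erase i) i)) *
            (X i * (((-1 : MvPolynomial (Fin r) k) ^ (cnt T i)) *
              monomial (a - Finsupp.single i 1) 1))) :
            Finset (Fin r) → MvPolynomial (Fin r) k) S
          = (Pi.single T (monomial a (1:k)) :
              Finset (Fin r) → MvPolynomial (Fin r) k) S := by
        rw [Finset.erase_insert hiT, mul_left_comm, neg_one_pow_mul_self, X_mul_monomial',
          single_add_sub hai0]
      rw [hterm_i]
      have hsum : ∀ j ∈ T,
          (Pi.single ((insert i T).erase j)
            (((-1 : MvPolynomial (Fin r) k) ^ (cnt ((insert i T).erase j) j)) *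
              (X j * (((-1 : MvPolynomial (Fin r) k) ^ (cnt T i)) *
                monomial (a - Finsupp.single i 1) 1))) :
            Finset (Fin r) → MvPolynomial (Fin r) k) S
          + (((-1:k) ^ (cnt (T.erase j) j)) •
              Hmon (k := k) m (T.erase j) (Finsupp.single j 1 + a)) S ∈ Jdl k r m := by
        intro j hj
        have hji : j ≠ i := fun hc => hiT (hc ▸ hj)
        have hXm : (X j : MvPolynomial (Fin r) k) *
            (((-1 : MvPolynomial (Fin r) k) ^ (cnt T i)) *
              monomial (a - Finsupp.single i 1) 1)
            = ((-1 : MvPolynomial (Fin r) k) ^ (cnt T i)) *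
              monomial (Finsupp.single j 1 + a - Finsupp.single i 1) 1 := by
          rw [mul_left_comm, X_mul_monomial', single_add_sub_comm (Ne.symm hji) hai0]
        by_cases haj : a j = m
        · -- high cross terms : the D-term lies in Jdl, the H-term vanishes
          rw [Hmon_not_low (fun hlow => by
            have h1 := hlow j
            rw [Finsupp.add_apply, Finsupp.single_apply, if_pos rfl, haj] at h1
            omega)]
          rw [Pi.smul_apply, Pi.zero_apply, smul_zero, add_zero]
          rw [Pi.single_apply]
          split
          · apply Ideal.mul_mem_left
            rw [hXm]
            apply Ideal.mul_mem_left
            apply monomial_mem_Jdl _ j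
            rw [Finsupp.tsub_apply, Finsupp.add_apply, Finsupp.single_apply, if_pos rfl,
              Finsupp.single_apply, if_neg (fun hc => hji hc.symm), haj]
            omega
          · exact Ideal.zero_mem _
        · -- low cross terms cancel exactly
          have hjNH : j ∈ nonHarm m T a := mem_nonHarm.mpr (by rw [if_pos hj]; exact haj)
          have hij : i < j := lt_of_le_of_ne (Finset.min'_le _ _ hjNH) (Ne.symm hji)
          have hmem3 : i ∈ nonHarm m (T.erase j) (Finsupp.single j 1 + a) := by
            rw [mem_nonHarm, if_neg (fun hc => hiT (Finset.mem_erase.mp hc).2)]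
            rw [Finsupp.add_apply, Finsupp.single_apply, if_neg hji]
            simpa using hai0
          have hbelow3 : ∀ l, l < i → l ∉ nonHarm m (T.erase j) (Finsupp.single j 1 + a) := by
            intro l hl
            apply not_nonHarm_transfer _ _ (hbelow l hl)
            · constructor
              · intro hm; exact (Finset.mem_erase.mp hm).2
              · intro hm
                exact Finset.mem_erase.mpr
                  ⟨fun hc => by subst hc; exact absurd (hl.trans hij) (lt_irrefl l), hm⟩
            · rw [Finsupp.add_apply, Finsupp.single_apply,
                if_neg (fun hc => by subst hc; exact absurd (hl.trans hij) (lt_irrefl j)),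
                zero_add]
          have hlow3 : low m (Finsupp.single j 1 + a) := by
            intro l
            rw [Finsupp.add_apply, Finsupp.single_apply]
            by_cases hl : j = l
            · subst hl; have := ha j; rw [if_pos rfl]; omega
            · rw [if_neg hl]; have := ha l; omega
          rw [Hmon_active hmem3 hbelow3 hlow3 (fun hc => hiT (Finset.mem_erase.mp hc).2)]
          have hsets : (insert i T).erase j = insert i (T.erase j) :=
            Finset.erase_insert_of_ne (Ne.symm hji)
          rw [hsets]
          rw [Pi.smul_apply, Pi.single_apply, Pi.single_apply]
          by_cases hSS : S = insert i (T.erase j)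
          · rw [if_pos hSS, if_pos hSS]
            have his : i ∉ T.erase j := fun hc => hiT (Finset.mem_erase.mp hc).2
            have hval : (((-1 : MvPolynomial (Fin r) k) ^ (cnt (insert i (T.erase j)) j)) *
                (X j * (((-1 : MvPolynomial (Fin r) k) ^ (cnt T i)) *
                  monomial (a - Finsupp.single i 1) 1)))
                + ((-1:k) ^ (cnt (T.erase j) j)) •
                  (((-1 : MvPolynomial (Fin r) k) ^ (cnt (T.erase j) i)) *
                    monomial (Finsupp.single j 1 + a - Finsupp.single i 1) 1) = 0 := by
              have hCC : (C ((-1:k) ^ (cnt (T.erase j) j)) : MvPolynomial (Fin r) k)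
                  = (-1) ^ (cnt (T.erase j) j) := by
                rw [map_pow, map_neg, map_one]
              rw [cnt_insert_of_lt his hij, cnt_erase_of_lt hij, hXm,
                MvPolynomial.smul_eq_C_mul, hCC]
              ring
            rw [hval]
            exact Ideal.zero_mem _
          · rw [if_neg hSS, if_neg hSS, smul_zero, add_zero]
            exact Ideal.zero_mem _
      have hfinal : (Pi.single T (monomial a (1:k)) :
              Finset (Fin r) → MvPolynomial (Fin r) k) S - 0
          - ((Pi.single T (monomial a (1:k)) :
              Finset (Fin r) → MvPolynomial (Fin r) k) S
            + ∑ j ∈ T, (Pi.single ((insert i T).erase j)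
              (((-1 : MvPolynomial (Fin r) k) ^ (cnt ((insert i T).erase j) j)) *
                (X j * (((-1 : MvPolynomial (Fin r) k) ^ (cnt T i)) *
                  monomial (a - Finsupp.single i 1) 1))) :
              Finset (Fin r) → MvPolynomial (Fin r) k) S)
          - ∑ j ∈ T, (((-1:k) ^ (cnt (T.erase j) j)) •
              Hmon (k := k) m (T.erase j) (Finsupp.single j 1 + a)) S
          = - ∑ j ∈ T, ((Pi.single ((insert i T).erase j)
              (((-1 : MvPolynomial (Fin r) k) ^ (cnt ((insert i T).erase j) j)) *
                (X j * (((-1 : MvPolynomial (Fin r) k) ^ (cnt T i)) *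
                  monomial (a - Finsupp.single i 1) 1))) :
              Finset (Fin r) → MvPolynomial (Fin r) k) S
            + (((-1:k) ^ (cnt (T.erase j) j)) •
                Hmon (k := k) m (T.erase j) (Finsupp.single j 1 + a)) S) := by
        rw [Finset.sum_add_distrib]
        ring
      rw [hfinal]
      exact Submodule.neg_mem _ (Ideal.sum_mem _ hsum)
  · -- fully harmonic monomial
    have hharm : ∀ j, (if j ∈ T then a j = m else a j = 0) := by
      intro j; by_contra hc; exact hNH ⟨j, mem_nonHarm.mpr hc⟩
    have haT : a = mexp m T := by
      ext j
      rw [mexp_apply]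
      have := hharm j
      by_cases hj : j ∈ T
      · rw [if_pos hj]; rwa [if_pos hj] at this
      · rw [if_neg hj]; rwa [if_neg hj] at this
    rw [if_pos haT, Hmon_of_empty hNH]
    have hz : Dpoly (0 : Finset (Fin r) → MvPolynomial (Fin r) k) S = 0 := by simp [Dpoly]
    rw [hz, hHD, Finset.sum_apply]
    rw [Finset.sum_eq_zero (fun j hj => by
      rw [Hmon_not_low (fun hlow => by
        have h1 := hlow j
        have h2 := hharm j
        rw [if_pos hj] at h2
        rw [Finsupp.add_apply, Finsupp.single_apply, if_pos rfl, h2] at h1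
        omega)]
      simp)]
    simpa using Ideal.zero_mem (Jdl k r m)

lemma bas_apply (T : Finset (Fin r)) (a : Fin r →₀ ℕ) (S : Finset (Fin r)) :
    bas (k := k) T a S = if S = T then monomial a 1 else 0 := by
  rw [bas, Pi.single_apply]

lemma smul_mem_Jdl (c : k) {p : MvPolynomial (Fin r) k} (hp : p ∈ Jdl k r m) :
    c • p ∈ Jdl k r m := by
  rw [smul_eq_C_mul]
  exact Ideal.mul_mem_left _ _ hp

lemma Dpoly_zero : Dpoly (0 : Finset (Fin r) → MvPolynomial (Fin r) k) = 0 := by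
  funext S; simp [Dpoly]

lemma Dpoly_add (f g : Finset (Fin r) → MvPolynomial (Fin r) k) :
    Dpoly (f + g) = Dpoly f + Dpoly g := by
  funext S
  simp [Dpoly, mul_add, Finset.sum_add_distrib]

lemma Dpoly_smul (c : k) (f : Finset (Fin r) → MvPolynomial (Fin r) k) :
    Dpoly (c • f) = c • Dpoly f := by
  funext S
  simp only [Dpoly, Pi.smul_apply, mul_smul_comm, Finset.smul_sum]

lemma Dpoly_sum {ι : Type*} (s : Finset ι) (f : ι → Finset (Fin r) → MvPolynomial (Fin r) k) :
    Dpoly (∑ j ∈ s, f j) = ∑ j ∈ s, Dpoly (f j) := by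
  classical
  induction s using Finset.cons_induction with
  | empty => simpa using Dpoly_zero (k := k) (r := r)
  | cons j s hj ih => rw [Finset.sum_cons, Dpoly_add, ih, Finset.sum_cons]

lemma decomp (g : Finset (Fin r) → MvPolynomial (Fin r) k) :
    g = ∑ T : Finset (Fin r), ∑ a ∈ (g T).support, coeff a (g T) • bas (k := k) T a := by
  classical
  funext S
  rw [Finset.sum_apply, Finset.sum_eq_single S]
  · rw [Finset.sum_apply]
    conv_lhs => rw [(g S).as_sum]
    apply Finset.sum_congr rfl
    intro a _
    rw [Pi.smul_apply, bas_apply, if_pos rfl, smul_eq_C_mul, C_mul_monomial, mul_one]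
  · intro T _ hT
    rw [Finset.sum_apply]
    apply Finset.sum_eq_zero
    intro a _
    rw [Pi.smul_apply, bas_apply, if_neg (Ne.symm hT), smul_zero]
  · intro hmem; exact absurd (Finset.mem_univ _) hmem

lemma proj_sum (g : Finset (Fin r) → MvPolynomial (Fin r) k) (S : Finset (Fin r)) :
    (∑ T : Finset (Fin r), ∑ a ∈ (g T).support,
        coeff a (g T) • (if a = mexp m T then bas (k := k) T a S else 0))
      = coeff (mexp m S) (g S) • monomial (mexp m S) (1:k) := by
  classical
  rw [Finset.sum_eq_single S]
  · rw [Finset.sum_eq_single (mexp m S)]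
    · rw [if_pos rfl, bas_apply, if_pos rfl]
    · intro a _ ha
      rw [if_neg ha, smul_zero]
    · intro hmem
      rw [MvPolynomial.notMem_support_iff.mp hmem, zero_smul]
  · intro T _ hT
    apply Finset.sum_eq_zero
    intro a _
    by_cases hc : a = mexp m T
    · rw [if_pos hc, bas_apply, if_neg (Ne.symm hT), smul_zero]
    · rw [if_neg hc, smul_zero]
  · intro hmem; exact absurd (Finset.mem_univ _) hmem

lemma global_key (g : Finset (Fin r) → MvPolynomial (Fin r) k)
    (hg : ∀ T, ∀ a ∈ (g T).support, low m a) (S : Finset (Fin r)) :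
    g S - (coeff (mexp m S) (g S)) • monomial (mexp m S) (1:k)
      - Dpoly (Hop m g) S - Hop m (Dpoly g) S ∈ Jdl k r m := by
  classical
  have hHop : Hop (k := k) m g
      = ∑ T : Finset (Fin r), ∑ a ∈ (g T).support, coeff a (g T) • Hmon (k := k) m T a := by
    funext S'
    rw [Hop]
    simp only [Finset.sum_apply, Pi.smul_apply]
  have hDg : Dpoly g = ∑ T : Finset (Fin r), ∑ a ∈ (g T).support,
      coeff a (g T) • Dpoly (bas (k := k) T a) := by
    conv_lhs => rw [decomp g]
    rw [Dpoly_sum]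
    apply Finset.sum_congr rfl
    intro T _
    rw [Dpoly_sum]
    apply Finset.sum_congr rfl
    intro a _
    rw [Dpoly_smul]
  have h1 : g S = ∑ T : Finset (Fin r), ∑ a ∈ (g T).support,
      coeff a (g T) • bas (k := k) T a S := by
    conv_lhs => rw [decomp g]
    simp only [Finset.sum_apply, Pi.smul_apply]
  have h3 : Dpoly (Hop (k := k) m g) S = ∑ T : Finset (Fin r), ∑ a ∈ (g T).support,
      coeff a (g T) • Dpoly (Hmon (k := k) m T a) S := by
    rw [hHop, Dpoly_sum]
    rw [Finset.sum_apply]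
    apply Finset.sum_congr rfl
    intro T _
    rw [Dpoly_sum, Finset.sum_apply]
    apply Finset.sum_congr rfl
    intro a _
    rw [Dpoly_smul, Pi.smul_apply]
  have h4 : Hop (k := k) m (Dpoly g) S = ∑ T : Finset (Fin r), ∑ a ∈ (g T).support,
      coeff a (g T) • Hop (k := k) m (Dpoly (bas (k := k) T a)) S := by
    rw [hDg, Hop_sum, Finset.sum_apply]
    apply Finset.sum_congr rfl
    intro T _
    rw [Hop_sum, Finset.sum_apply]
    apply Finset.sum_congr rfl
    intro a _
    rw [Hop_smul, Pi.smul_apply]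
  rw [← proj_sum g S, h1, h3, h4]
  rw [← Finset.sum_sub_distrib, ← Finset.sum_sub_distrib, ← Finset.sum_sub_distrib]
  apply Ideal.sum_mem
  intro T _
  rw [← Finset.sum_sub_distrib, ← Finset.sum_sub_distrib, ← Finset.sum_sub_distrib]
  apply Ideal.sum_mem
  intro a ha
  rw [← smul_sub, ← smul_sub, ← smul_sub]
  exact smul_mem_Jdl _ (keymon T a (hg T a ha) S)

lemma zb_sum_apply (c : Finset (Fin r) → k) (S : Finset (Fin r)) :
    (∑ T : Finset (Fin r), c T • zb k r m T) S =
      Ideal.Quotient.mk (Jdl k r m) (c S • (monomial (mexp m S) 1)) := by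
  classical
  rw [Finset.sum_apply, Finset.sum_eq_single S]
  · rw [Pi.smul_apply, zb, Pi.single_eq_same, prod_X_pow_eq, mk_smul]
  · intro T _ hT
    rw [Pi.smul_apply, zb, Pi.single_apply, if_neg (Ne.symm hT), smul_zero]
  · intro h; exact absurd (Finset.mem_univ S) h

lemma part_iv (x : Finset (Fin r) → Rbar k r m) (hx : koszulDbar k r m 0 x = 0) :
    ∃ c : Finset (Fin r) → k,
      x - ∑ S : Finset (Fin r), c S • zb k r m S ∈ LinearMap.range (koszulDbar k r m 0) := by
  classical
  choose y hy using fun T => exists_lowRep (x T)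
  have hxy : x = fun T => Ideal.Quotient.mk (Jdl k r m) (y T) :=
    funext fun T => ((hy T).2).symm
  have hcyc : ∀ S, Dpoly y S ∈ Jdl k r m := by
    intro S
    have h0 : koszulDbar k r m 0 (fun T => Ideal.Quotient.mk (Jdl k r m) (y T)) S = 0 := by
      rw [← hxy, hx]; rfl
    rw [koszulDbar_mk] at h0
    exact Ideal.Quotient.eq_zero_iff_mem.mp h0
  refine ⟨fun S => coeff (mexp m S) (y S),
    ⟨fun S => Ideal.Quotient.mk (Jdl k r m) (Hop m y S), ?_⟩⟩
  funext S
  rw [koszulDbar_mk]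
  rw [Pi.sub_apply, zb_sum_apply, hxy]
  have hkey := global_key y (fun T => (hy T).1) S
  rw [Hop_jdl (Dpoly y) hcyc] at hkey
  rw [Pi.zero_apply, sub_zero] at hkey
  have : Dpoly (Hop m y) S - (y S - coeff (mexp m S) (y S) • monomial (mexp m S) (1:k))
      ∈ Jdl k r m := by
    have := Submodule.neg_mem _ hkey
    convert this using 1
    ring
  rw [Ideal.Quotient.eq.mpr this]
  rw [map_sub]

end St3

theorem statement3 (k : Type*) [Field k] (r m : ℕ) :
    -- (i) the induced differential on K_r(m) ⊗_R R̄ vanishes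
    koszulDbar k r m m = 0 ∧
    -- (ii) the z_S are cycles in K_r(0) ⊗_R R̄ …
    (∀ S : Finset (Fin r), koszulDbar k r m 0 (zb k r m S) = 0) ∧
    -- … whose cohomology classes are linearly independent over k …
    (∀ c : Finset (Fin r) → k,
      (∑ S : Finset (Fin r), c S • zb k r m S) ∈ LinearMap.range (koszulDbar k r m 0) →
        c = 0) ∧
    -- … and span the cohomology H(K_r(0) ⊗_R R̄) over k …
    (∀ x : Finset (Fin r) → Rbar k r m, koszulDbar k r m 0 x = 0 →
      ∃ c : Finset (Fin r) → k,
        x - ∑ S : Finset (Fin r), c S • zb k r m S ∈ LinearMap.range (koszulDbar k r m 0)) ∧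
    -- … and multiply by the exterior algebra rule (so H(K_r(0) ⊗_R R̄) is the exterior
    -- algebra over k on the classes [tᵢ^m sᵢ^0])
    (∀ S T : Finset (Fin r), Disjoint S T →
      kMulBar k r m (zb k r m S) (zb k r m T) =
        ((-1 : Rbar k r m) ^ (∑ i ∈ S, (T.filter (fun j => j < i)).card)) •
          zb k r m (S ∪ T)) ∧
    -- (iii) ι sends sᵢ^m to the cycle tᵢ^m sᵢ^0 representing [tᵢ^m sᵢ^0] …
    (∀ i : Fin r, kIotaBar k r m (Pi.single {i} 1) = zb k r m {i}) ∧
    -- … and sends s₁^m∧…∧s_r^m to the class of t₁^m⋯t_r^m s₁^0∧…∧s_r^0 …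
    kIotaBar k r m (Pi.single Finset.univ 1) = zb k r m Finset.univ ∧
    -- … which is nonzero in cohomology
    zb k r m Finset.univ ∉ LinearMap.range (koszulDbar k r m 0) :=
  ⟨St3.part_i, St3.part_ii, St3.part_iii, St3.part_iv, St3.part_v, St3.part_vi,
    St3.part_vii, St3.part_viii⟩
end

section
/- Suppose deg t_i = 2 and deg s_i^m = 2m+1 (case (0)) and r ≥ 3. Then every degree-preserving map γ: K_r(m) → K_r(0) of differential R-modules lifting the canonical projection H(K_r(m)) = R/(t_1^{m+1},...,t_r^{m+1}) → H(K_r(0)) = k is injective on the free R-submodule of K_r(m) generated by the r+1 elements s_1^m, ..., s_r^m, s_1^m∧s_2^m∧s_3^m. -/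
/-!
Statement 5 (Lemma 2.3): in case (0) (`char k = 0`, `deg tᵢ = 2`, `deg sᵢ^m = 2m+1`), if
`r ≥ 3`, then every degree-preserving map `γ : K_r(m) → K_r(0)` of differential `R`-modules
lifting the canonical projection `H(K_r(m)) = R/(t₁^{m+1},…,t_r^{m+1}) → H(K_r(0)) = k`
is injective on the free `R`-submodule of `K_r(m)` generated by the `r+1` elements
`s₁^m, …, s_r^m, s₁^m∧s₂^m∧s₃^m`.
The Koszul complex is modelled as in Statement 0, on basis elements `eK S`, `S ⊆ Fin r`;
an element is homogeneous of total degree `n` when each coefficient polynomial `f S` is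
homogeneous (w.r.t. `deg tᵢ = 2`) of degree `n - (2m+1)·|S|`.
-/

open MvPolynomial

/-- The underlying `R`-module of the Koszul complex `K_r(m)`. -/
abbrev Kmod (k : Type*) [Field k] (r : ℕ) := Finset (Fin r) → MvPolynomial (Fin r) k

/-- Basis element corresponding to the exterior monomial `⋀_{i ∈ S} sᵢ`. -/
noncomputable def eK (k : Type*) [Field k] {r : ℕ} (S : Finset (Fin r)) : Kmod k r :=
  Pi.single S 1

/-- The Koszul differential of `K_r(m)`. -/
noncomputable def koszulD (k : Type*) [Field k] (r m : ℕ) :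
    Kmod k r →ₗ[MvPolynomial (Fin r) k] Kmod k r :=
  LinearMap.pi fun S => ∑ i ∈ Sᶜ,
    (((-1 : MvPolynomial (Fin r) k) ^ (S.filter (fun j => j < i)).card) * X i ^ (m + 1)) •
      LinearMap.proj (insert i S)

/-- Homogeneity of total degree `n` in `K_r(m)` for case (0): `deg tᵢ = 2`,
`deg sᵢ^m = 2m+1` (every monomial `t^d` of `f S` satisfies `2|d| + (2m+1)|S| = n`). -/
def IsHomogC {k : Type*} [Field k] {r : ℕ} (m : ℕ) (n : ℕ) (f : Kmod k r) : Prop :=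
  ∀ S : Finset (Fin r), ∀ d ∈ (f S).support,
    2 * (d.sum fun _ e => e) + (2 * m + 1) * S.card = n

section Chunk1
variable {k : Type*} [Field k] {r m : ℕ}

lemma eK_apply (S T : Finset (Fin r)) : eK k S T = if T = S then 1 else 0 := by
  simp [eK, Pi.single_apply]

lemma koszulD_apply (f : Kmod k r) (T : Finset (Fin r)) :
    koszulD k r m f T = ∑ i ∈ Tᶜ,
      ((-1 : MvPolynomial (Fin r) k) ^ (T.filter (fun j => j < i)).card * X i ^ (m + 1)) *
        f (insert i T) := by
  simp [koszulD, LinearMap.pi_apply, LinearMap.sum_apply, smul_eq_mul]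

lemma insert_cond_iff {S T : Finset (Fin r)} {i : Fin r} :
    (i ∉ T ∧ insert i T = S) ↔ (i ∈ S ∧ T = S.erase i) := by
  constructor
  · rintro ⟨hi, rfl⟩
    exact ⟨Finset.mem_insert_self i T, by rw [Finset.erase_insert hi]⟩
  · rintro ⟨hi, rfl⟩
    exact ⟨Finset.notMem_erase i S, Finset.insert_erase hi⟩

lemma koszulD_eK (S : Finset (Fin r)) :
    koszulD k r m (eK k S) = ∑ i ∈ S,
      ((-1 : MvPolynomial (Fin r) k) ^ ((S.erase i).filter (fun j => j < i)).card * X i ^ (m + 1))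
        • eK k (S.erase i) := by
  funext T
  rw [koszulD_apply]
  have hL : ∀ i ∈ Tᶜ,
      ((-1 : MvPolynomial (Fin r) k) ^ (T.filter (fun j => j < i)).card * X i ^ (m + 1)) *
        eK k S (insert i T)
      = if i ∈ S ∧ T = S.erase i then
          ((-1 : MvPolynomial (Fin r) k) ^ (T.filter (fun j => j < i)).card * X i ^ (m + 1))
        else 0 := by
    intro i hi
    rw [eK_apply]
    by_cases h : insert i T = S
    · have : i ∈ S ∧ T = S.erase i := insert_cond_iff.mp ⟨Finset.mem_compl.mp hi, h⟩
      rw [if_pos h, if_pos this, mul_one]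
    · have : ¬(i ∈ S ∧ T = S.erase i) := by
        intro hc
        exact h (insert_cond_iff.mpr hc).2
      rw [if_neg h, if_neg this, mul_zero]
  rw [Finset.sum_congr rfl hL]
  have hR : ∀ i ∈ S,
      (((-1 : MvPolynomial (Fin r) k) ^ ((S.erase i).filter (fun j => j < i)).card * X i ^ (m + 1))
        • eK k (S.erase i)) T
      = if i ∈ S ∧ T = S.erase i then
          ((-1 : MvPolynomial (Fin r) k) ^ (T.filter (fun j => j < i)).card * X i ^ (m + 1))
        else 0 := by
    intro i hi
    have : (((-1 : MvPolynomial (Fin r) k) ^ ((S.erase i).filter (fun j => j < i)).card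
        * X i ^ (m + 1)) • eK k (S.erase i)) T
        = ((-1 : MvPolynomial (Fin r) k) ^ ((S.erase i).filter (fun j => j < i)).card
        * X i ^ (m + 1)) * eK k (S.erase i) T := rfl
    rw [this, eK_apply]
    by_cases h : T = S.erase i
    · subst h; rw [if_pos rfl, if_pos ⟨hi, rfl⟩, mul_one]
    · rw [if_neg h, if_neg (by tauto), mul_zero]
  rw [Finset.sum_apply, Finset.sum_congr rfl hR]
  set c : Fin r → MvPolynomial (Fin r) k := fun i =>
    (-1 : MvPolynomial (Fin r) k) ^ (T.filter (fun j => j < i)).card * X i ^ (m + 1) with hc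
  have key : ∀ (s : Finset (Fin r)),
      (∀ i : Fin r, (i ∈ S ∧ T = S.erase i) → i ∈ s) →
      (∑ i ∈ s, if i ∈ S ∧ T = S.erase i then c i else 0)
        = ∑ i : Fin r, if i ∈ S ∧ T = S.erase i then c i else 0 := by
    intro s hs
    refine Finset.sum_subset (Finset.subset_univ s) ?_
    intro i _ hi
    rw [if_neg fun hc' => hi (hs i hc')]
  rw [key Tᶜ ?_, key S ?_]
  · rintro i ⟨hiS, _⟩
    exact hiS
  · rintro i ⟨hiS, rfl⟩
    exact Finset.mem_compl.mpr (Finset.notMem_erase i S)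

end Chunk1


section Chunk1b
variable {k : Type*} [Field k] {r m : ℕ}

lemma koszulD_eK_empty : koszulD k r m (eK k ∅) = 0 := by
  rw [koszulD_eK]; simp

lemma koszulD_eK_single (i : Fin r) :
    koszulD k r m (eK k {i}) = (X i ^ (m + 1) : MvPolynomial (Fin r) k) • eK k ∅ := by
  rw [koszulD_eK, Finset.sum_singleton, Finset.erase_singleton]
  simp

lemma koszulD_eK_pair {i j : Fin r} (hij : i < j) :
    koszulD k r m (eK k {i, j}) =
      (X i ^ (m + 1) : MvPolynomial (Fin r) k) • eK k {j} - (X j ^ (m + 1) : MvPolynomial (Fin r) k) • eK k {i} := by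
  have hne : i ≠ j := ne_of_lt hij
  rw [koszulD_eK, Finset.sum_pair hne]
  have e1 : ({i, j} : Finset (Fin r)).erase i = {j} := by
    rw [Finset.erase_insert (by simp [hne])]
  have e2 : ({i, j} : Finset (Fin r)).erase j = {i} := by
    rw [Finset.erase_insert_of_ne hne, Finset.erase_singleton]; rfl
  rw [e1, e2]
  have f1 : ({j} : Finset (Fin r)).filter (fun x => x < i) = ∅ := by
    rw [Finset.filter_singleton, if_neg (by simp [not_lt, le_of_lt hij])]
  have f2 : ({i} : Finset (Fin r)).filter (fun x => x < j) = {i} := by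
    rw [Finset.filter_singleton, if_pos hij]
  rw [f1, f2]
  simp [sub_eq_add_neg]

lemma koszulD_eK_triple {i j l : Fin r} (h1 : i < j) (h2 : j < l) :
    koszulD k r m (eK k {i, j, l}) =
      (X i ^ (m + 1) : MvPolynomial (Fin r) k) • eK k {j, l} - (X j ^ (m + 1) : MvPolynomial (Fin r) k) • eK k {i, l}
        + (X l ^ (m + 1) : MvPolynomial (Fin r) k) • eK k {i, j} := by
  have hij : i ≠ j := ne_of_lt h1
  have hjl : j ≠ l := ne_of_lt h2
  have hil : i ≠ l := ne_of_lt (lt_trans h1 h2)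
  have hmem : i ∉ ({j, l} : Finset (Fin r)) := by simp [hij, hil]
  rw [koszulD_eK, Finset.sum_insert hmem, Finset.sum_pair hjl]
  have e1 : ({i, j, l} : Finset (Fin r)).erase i = {j, l} := Finset.erase_insert hmem
  have e2 : ({i, j, l} : Finset (Fin r)).erase j = {i, l} := by
    rw [Finset.erase_insert_of_ne hij, Finset.erase_insert (by simp [hjl])]
  have e3 : ({i, j, l} : Finset (Fin r)).erase l = {i, j} := by
    rw [Finset.erase_insert_of_ne hil, Finset.erase_insert_of_ne hjl,
      Finset.erase_singleton]
    simp
  rw [e1, e2, e3]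
  have f1 : ({j, l} : Finset (Fin r)).filter (fun x => x < i) = ∅ := by
    rw [Finset.filter_insert, if_neg (by simp [not_lt, le_of_lt h1]),
      Finset.filter_singleton, if_neg (by simp [not_lt, le_of_lt (lt_trans h1 h2)])]
  have f2 : ({i, l} : Finset (Fin r)).filter (fun x => x < j) = {i} := by
    rw [Finset.filter_insert, if_pos h1, Finset.filter_singleton,
      if_neg (by simp [not_lt, le_of_lt h2])]
    simp
  have f3 : ({i, j} : Finset (Fin r)).filter (fun x => x < l) = {i, j} := by
    rw [Finset.filter_insert, if_pos (lt_trans h1 h2), Finset.filter_singleton, if_pos h2]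
  rw [f1, f2, f3]
  have c2 : ({i, j} : Finset (Fin r)).card = 2 := by
    rw [Finset.card_insert_of_notMem (by simp [hij]), Finset.card_singleton]
  rw [c2]
  simp [sub_eq_add_neg, add_assoc]

end Chunk1b


section Chunk2
open Matrix

variable {k : Type*} [Field k]

lemma S5_det_piecewise_smul {n : ℕ} {A : Type*} [CommRing A] (s : Finset (Fin n))
    (c : Fin n → A) (M B : Matrix (Fin n) (Fin n) A) :
    Matrix.det (s.piecewise (fun i => c i • M i) B : Fin n → Fin n → A)
      = (∏ i ∈ s, c i) * Matrix.det (s.piecewise M B : Fin n → Fin n → A) := by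
  classical
  induction s using Finset.induction generalizing B with
  | empty => erw [Finset.piecewise_empty]; simp
  | @insert a s ha ih =>
    erw [Finset.piecewise_insert, Finset.piecewise_insert]
    have h1 : (Function.update (s.piecewise (fun i => c i • M i) B) a (c a • M a))
        = Matrix.updateRow (s.piecewise (fun i => c i • M i) B : Fin n → Fin n → A) a
            (c a • M a) := rfl
    have h2 : (Function.update (s.piecewise M B) a (M a))
        = Matrix.updateRow (s.piecewise M B : Fin n → Fin n → A) a (M a) := rfl
    rw [h1, h2]; erw [Matrix.det_updateRow_smul]
    have h3 : Matrix.updateRow (s.piecewise (fun i => c i • M i) B : Fin n → Fin n → A) a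
          (M a) = (s.piecewise (fun i => c i • M i) (Function.update B a (M a))
            : Fin n → Fin n → A) := by
      erw [← Finset.update_piecewise_of_notMem _ _ _ ha]; rfl
    rw [h3]; erw [ih]
    have h4 : (s.piecewise M (Function.update B a (M a)) : Fin n → Fin n → A)
        = Matrix.updateRow (s.piecewise M B : Fin n → Fin n → A) a (M a) := by
      erw [← Finset.update_piecewise_of_notMem _ _ _ ha]; rfl
    rw [h4, Finset.prod_insert ha, mul_assoc]

lemma S5_prod_X_pow_monomial {r m : ℕ} (s : Finset (Fin r)) :
    (∏ i ∈ s, (X i : MvPolynomial (Fin r) k) ^ m)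
      = monomial (∑ i ∈ s, Finsupp.single i m) 1 := by
  classical
  induction s using Finset.induction with
  | empty => simp
  | insert _ _ ha ih =>
    rw [Finset.prod_insert ha, Finset.sum_insert ha, ih, X_pow_eq_monomial, monomial_mul,
      one_mul]

lemma S5_coeff_aeval_vanish {r : ℕ} (s : Finset (Fin r)) (κ : Fin r →₀ ℕ)
    (hκ : ∀ j ∈ s, κ j = 0) (p : MvPolynomial (Fin r) k) :
    MvPolynomial.coeff κ
        (aeval (fun j => if j ∈ s then (0 : MvPolynomial (Fin r) k) else X j) p)
      = MvPolynomial.coeff κ p := by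
  classical
  induction p using MvPolynomial.induction_on generalizing κ with
  | C a => simp [aeval_C, algebraMap_eq]
  | add p q hp hq => simp only [map_add, MvPolynomial.coeff_add, hp κ hκ, hq κ hκ]
  | mul_X p j hp =>
    rw [_root_.map_mul, aeval_X]
    by_cases hj : j ∈ s
    · rw [if_pos hj, mul_zero, MvPolynomial.coeff_zero, MvPolynomial.coeff_mul_X']
      rw [if_neg]
      simp only [Finsupp.mem_support_iff, ne_eq, not_not]
      exact hκ j hj
    · rw [if_neg hj, MvPolynomial.coeff_mul_X', MvPolynomial.coeff_mul_X']
      by_cases hmem : j ∈ κ.support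
      · rw [if_pos hmem, if_pos hmem]
        refine hp _ fun j' hj' => ?_
        rw [Finsupp.tsub_apply, hκ j' hj', Nat.zero_sub]
      · rw [if_neg hmem, if_neg hmem]

lemma S5_det_coeff_one {r m : ℕ} (G : Matrix (Fin r) (Fin r) (MvPolynomial (Fin r) k))
    (hG : ∀ i, ∑ j, G i j * X j = X i ^ (m + 1)) :
    MvPolynomial.coeff (∑ i : Fin r, Finsupp.single i m) G.det = 1 := by
  classical
  set D : Matrix (Fin r) (Fin r) (MvPolynomial (Fin r) k) := fun i j => if i = j then X i ^ m else 0 with hD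
  set E : Matrix (Fin r) (Fin r) (MvPolynomial (Fin r) k) := fun i j => if i = j then 1 else 0 with hE
  set B : Matrix (Fin r) (Fin r) (MvPolynomial (Fin r) k) := fun i j => G i j - D i j with hB
  have hDsum : ∀ i, ∑ j, D i j * X j = X i ^ (m + 1) := by
    intro i
    rw [Finset.sum_eq_single i]
    · rw [hD]; simp [pow_succ]
    · intro j _ hj; rw [hD]; simp [Ne.symm hj]
    · intro h; exact absurd (Finset.mem_univ i) h
  have hsyz : ∀ i, ∑ j, B i j * X j = 0 := by
    intro i
    have : ∑ j, B i j * X j = (∑ j, G i j * X j) - ∑ j, D i j * X j := by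
      rw [← Finset.sum_sub_distrib]
      exact Finset.sum_congr rfl fun j _ => by rw [hB]; ring
    rw [this, hG i, hDsum i, sub_self]
  have hGeq : (G : Fin r → Fin r → MvPolynomial (Fin r) k) = (D : Fin r → Fin r → MvPolynomial (Fin r) k) + B := by
    funext i j
    show G i j = D i j + B i j
    rw [hB]; ring
  have expand : G.det = ∑ s : Finset (Fin r),
      Matrix.det (s.piecewise (D : Fin r → Fin r → MvPolynomial (Fin r) k) (B : Fin r → Fin r → MvPolynomial (Fin r) k)
        : Fin r → Fin r → MvPolynomial (Fin r) k) := by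
    show Matrix.detRowAlternating (G : Fin r → Fin r → MvPolynomial (Fin r) k) = _
    rw [hGeq]
    exact (Matrix.detRowAlternating (R := MvPolynomial (Fin r) k) (n := Fin r)).toMultilinearMap.map_add_univ D B
  rw [expand, MvPolynomial.coeff_sum]
  rw [Finset.sum_eq_single Finset.univ]
  · rw [Finset.piecewise_univ]
    have : Matrix.det (D : Fin r → Fin r → MvPolynomial (Fin r) k) = ∏ i : Fin r, (X i : MvPolynomial (Fin r) k) ^ m := by
      have hd : (D : Fin r → Fin r → MvPolynomial (Fin r) k) = Matrix.diagonal (fun i => (X i : MvPolynomial (Fin r) k) ^ m) := by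
        funext i j
        rw [hD]
        by_cases h : i = j
        · subst h; simp [Matrix.diagonal]
        · simp [Matrix.diagonal, h, Ne.symm h]
      rw [hd, Matrix.det_diagonal]
    rw [this, S5_prod_X_pow_monomial, MvPolynomial.coeff_monomial, if_pos rfl]
  · -- s ≠ univ : coefficient vanishes
    intro s _ hs
    have hDsmul : (D : Fin r → Fin r → MvPolynomial (Fin r) k) = fun i => (X i : MvPolynomial (Fin r) k) ^ m • E i := by
      funext i j
      rw [hD, hE]
      by_cases h : i = j
      · subst h; simp
      · simp [h]
    rw [hDsmul, S5_det_piecewise_smul s (fun i => (X i : MvPolynomial (Fin r) k) ^ m) E B]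
    -- split the target exponent
    have hsplit : (∑ i : Fin r, Finsupp.single i m)
        = (∑ i ∈ s, Finsupp.single i m) + ∑ i ∈ sᶜ, Finsupp.single i m := by
      rw [Finset.sum_add_sum_compl]
    rw [hsplit, S5_prod_X_pow_monomial s, MvPolynomial.coeff_monomial_mul, one_mul]
    -- now show coeff κ (det (piecewise E B)) = 0
    set κ : Fin r →₀ ℕ := ∑ i ∈ sᶜ, Finsupp.single i m with hκdef
    have hκ : ∀ j ∈ s, κ j = 0 := by
      intro j hj
      rw [hκdef, Finsupp.finset_sum_apply]
      refine Finset.sum_eq_zero fun i hi => ?_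
      have : i ≠ j := fun h => (Finset.mem_compl.mp hi) (h ▸ hj)
      rw [Finsupp.single_apply, if_neg this]
    set ρ : MvPolynomial (Fin r) k →ₐ[k] MvPolynomial (Fin r) k :=
      aeval (fun j => if j ∈ s then (0 : MvPolynomial (Fin r) k) else X j) with hρ
    have hzero : ρ (Matrix.det (s.piecewise (E : Fin r → Fin r → MvPolynomial (Fin r) k) B
        : Fin r → Fin r → MvPolynomial (Fin r) k)) = 0 := by
      have hmapdet := RingHom.map_det (ρ.toRingHom)
        (Matrix.of (s.piecewise (E : Fin r → Fin r → MvPolynomial (Fin r) k) B))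
      rw [show Matrix.det (s.piecewise (E : Fin r → Fin r → MvPolynomial (Fin r) k) B : Fin r → Fin r → MvPolynomial (Fin r) k)
        = (Matrix.of (s.piecewise (E : Fin r → Fin r → MvPolynomial (Fin r) k) B)).det from rfl]
      rw [show (ρ : MvPolynomial (Fin r) k → MvPolynomial (Fin r) k) ((Matrix.of (s.piecewise (E : Fin r → Fin r → MvPolynomial (Fin r) k) B)).det)
        = ρ.toRingHom ((Matrix.of (s.piecewise (E : Fin r → Fin r → MvPolynomial (Fin r) k) B)).det) from rfl]
      rw [hmapdet]
      rw [← Matrix.exists_mulVec_eq_zero_iff]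
      refine ⟨fun j => if j ∈ s then 0 else X j, ?_, ?_⟩
      · obtain ⟨j0, hj0⟩ : ∃ j0, j0 ∉ s := by
          by_contra hc
          push_neg at hc
          exact hs (Finset.eq_univ_iff_forall.mpr hc)
        intro hv
        have := congrFun hv j0
        rw [if_neg hj0] at this
        exact MvPolynomial.X_ne_zero j0 this
      · funext i
        show ∑ j, (ρ.toRingHom.mapMatrix (Matrix.of (s.piecewise (E : Fin r → Fin r → MvPolynomial (Fin r) k) B)))
            i j * (if j ∈ s then 0 else X j) = 0
        by_cases hi : i ∈ s
        · rw [Finset.sum_eq_single i]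
          · rw [if_pos hi, mul_zero]
          · intro j _ hj
            have hentry : (s.piecewise (E : Fin r → Fin r → MvPolynomial (Fin r) k) B) i j
                = 0 := by
              rw [Finset.piecewise_eq_of_mem _ _ _ hi]; simp [hE, Ne.symm hj]
            simp only [RingHom.mapMatrix_apply, Matrix.map_apply, Matrix.of_apply, hentry,
              _root_.map_zero, zero_mul]
          · intro h; exact absurd (Finset.mem_univ i) h
        · have hrow : ∀ j, (s.piecewise (E : Fin r → Fin r → MvPolynomial (Fin r) k) B) i j = B i j :=
            fun j => by rw [Finset.piecewise_eq_of_notMem _ _ _ hi]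
          have : ∀ j, (if j ∈ s then (0:MvPolynomial (Fin r) k) else X j) = ρ (X j) := by
            intro j; rw [hρ, aeval_X]
          calc ∑ j, (ρ.toRingHom.mapMatrix (Matrix.of (s.piecewise
                (E : Fin r → Fin r → MvPolynomial (Fin r) k) B))) i j * (if j ∈ s then 0 else X j)
              = ∑ j, ρ (B i j * X j) := by
                refine Finset.sum_congr rfl fun j _ => ?_
                have hterm : (ρ.toRingHom.mapMatrix (Matrix.of (s.piecewise
                    (E : Fin r → Fin r → (MvPolynomial (Fin r) k)) B))) i j = ρ (B i j) := by
                  simp only [RingHom.mapMatrix_apply, Matrix.map_apply, Matrix.of_apply, hrow j]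
                  rfl
                rw [hterm, this j, ← _root_.map_mul]
            _ = ρ (∑ j, B i j * X j) := by rw [map_sum]
            _ = 0 := by rw [hsyz i, map_zero]
    calc MvPolynomial.coeff κ (Matrix.det (s.piecewise (E : Fin r → Fin r → MvPolynomial (Fin r) k) B
          : Fin r → Fin r → MvPolynomial (Fin r) k))
        = MvPolynomial.coeff κ (ρ (Matrix.det (s.piecewise (E : Fin r → Fin r → MvPolynomial (Fin r) k) B
          : Fin r → Fin r → MvPolynomial (Fin r) k))) := (S5_coeff_aeval_vanish s κ hκ _).symm
      _ = 0 := by rw [hzero, MvPolynomial.coeff_zero]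
  · intro h; exact absurd (Finset.mem_univ _) h

lemma S5_vecMul_eq_zero {r m : ℕ} (G : Matrix (Fin r) (Fin r) (MvPolynomial (Fin r) k))
    (hG : ∀ i, ∑ j, G i j * X j = X i ^ (m + 1))
    (a : Fin r → MvPolynomial (Fin r) k) (ha : Matrix.vecMul a G = 0) : a = 0 := by
  classical
  have hdet : G.det ≠ 0 := by
    intro h0
    have := S5_det_coeff_one (k := k) G hG
    rw [h0, MvPolynomial.coeff_zero] at this
    exact one_ne_zero this.symm
  have h1 : Matrix.vecMul a (G * G.adjugate) = 0 := by
    rw [← Matrix.vecMul_vecMul, ha, Matrix.zero_vecMul]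
  rw [Matrix.mul_adjugate] at h1
  funext j
  have hj := congrFun h1 j
  rw [Pi.zero_apply] at hj
  have heval : (Matrix.vecMul a (G.det • (1 : Matrix (Fin r) (Fin r) (MvPolynomial (Fin r) k)))) j
      = G.det * a j := by
    simp only [Matrix.vecMul, dotProduct, Matrix.smul_apply, Matrix.one_apply,
      smul_eq_mul]
    rw [Finset.sum_eq_single j]
    · rw [if_pos rfl, mul_one]; ring
    · intro i _ hij; rw [if_neg hij, mul_zero, mul_zero]
    · intro h; exact absurd (Finset.mem_univ j) h
  rw [heval] at hj
  rw [Pi.zero_apply]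
  rcases mul_eq_zero.mp hj with h | h
  · exact absurd h hdet
  · exact h

end Chunk2


section Chunk3
variable {k : Type*} [Field k] {r : ℕ}

lemma S5_support_ge {j0 j1 j2 : Fin r} (h01 : j0 ≠ j1) (h02 : j0 ≠ j2) (c : ℕ)
    (A B C : MvPolynomial (Fin r) k)
    (heq : X j0 ^ c * A = X j1 ^ c * B + X j2 ^ c * C) :
    ∀ d ∈ A.support, c ≤ d j1 ∨ c ≤ d j2 := by
  intro d hd
  by_contra hcon
  push_neg at hcon
  have key := congrArg (MvPolynomial.coeff (Finsupp.single j0 c + d)) heq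
  rw [X_pow_eq_monomial, MvPolynomial.coeff_monomial_mul, MvPolynomial.coeff_add] at key
  rw [X_pow_eq_monomial, X_pow_eq_monomial, MvPolynomial.coeff_monomial_mul',
    MvPolynomial.coeff_monomial_mul'] at key
  rw [if_neg, if_neg, one_mul] at key
  · exact MvPolynomial.mem_support_iff.mp hd (by rw [key, add_zero])
  · rw [Finsupp.single_le_iff, Finsupp.add_apply, Finsupp.single_apply, if_neg h02, zero_add]
    exact Nat.not_le.mpr hcon.2
  · rw [Finsupp.single_le_iff, Finsupp.add_apply, Finsupp.single_apply, if_neg h01, zero_add]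
    exact Nat.not_le.mpr hcon.1

lemma S5_split (j1 j2 : Fin r) (c : ℕ) (A : MvPolynomial (Fin r) k)
    (hA : ∀ d ∈ A.support, c ≤ d j1 ∨ c ≤ d j2) :
    ∃ α β : MvPolynomial (Fin r) k,
      A = X j1 ^ c * α + X j2 ^ c * β ∧
      (∀ ν ∈ α.support, ν + Finsupp.single j1 c ∈ A.support) ∧
      (∀ ν ∈ β.support, ν + Finsupp.single j2 c ∈ A.support) := by
  classical
  set s1 := A.support.filter (fun d => c ≤ d j1) with hs1
  set s2 := A.support.filter (fun d => ¬ c ≤ d j1) with hs2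
  refine ⟨∑ d ∈ s1, monomial (d - Finsupp.single j1 c) (A.coeff d),
          ∑ d ∈ s2, monomial (d - Finsupp.single j2 c) (A.coeff d), ?_, ?_, ?_⟩
  · rw [Finset.mul_sum, Finset.mul_sum]
    have h1 : ∀ d ∈ s1, X j1 ^ c * monomial (d - Finsupp.single j1 c) (A.coeff d)
        = monomial d (A.coeff d) := by
      intro d hd
      have hle : Finsupp.single j1 c ≤ d :=
        Finsupp.single_le_iff.mpr (Finset.mem_filter.mp hd).2
      rw [X_pow_eq_monomial, monomial_mul, one_mul, add_tsub_cancel_of_le hle]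
    have h2 : ∀ d ∈ s2, X j2 ^ c * monomial (d - Finsupp.single j2 c) (A.coeff d)
        = monomial d (A.coeff d) := by
      intro d hd
      obtain ⟨hdA, hd1⟩ := Finset.mem_filter.mp hd
      have hle : Finsupp.single j2 c ≤ d :=
        Finsupp.single_le_iff.mpr ((hA d hdA).resolve_left hd1)
      rw [X_pow_eq_monomial, monomial_mul, one_mul, add_tsub_cancel_of_le hle]
    rw [Finset.sum_congr rfl h1, Finset.sum_congr rfl h2, hs1, hs2,
      Finset.sum_filter_add_sum_filter_not]
    exact MvPolynomial.as_sum A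
  · intro ν hν
    obtain ⟨d, hd, hν'⟩ := Finset.mem_biUnion.mp (MvPolynomial.support_sum hν)
    obtain ⟨hdA, hdc⟩ := Finset.mem_filter.mp hd
    have hle : Finsupp.single j1 c ≤ d := Finsupp.single_le_iff.mpr hdc
    rw [MvPolynomial.support_monomial, if_neg (MvPolynomial.mem_support_iff.mp hdA)] at hν'
    rw [Finset.mem_singleton.mp hν', tsub_add_cancel_of_le hle]
    exact hdA
  · intro ν hν
    obtain ⟨d, hd, hν'⟩ := Finset.mem_biUnion.mp (MvPolynomial.support_sum hν)
    obtain ⟨hdA, hdc⟩ := Finset.mem_filter.mp hd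
    have hle : Finsupp.single j2 c ≤ d := Finsupp.single_le_iff.mpr ((hA d hdA).resolve_left hdc)
    rw [MvPolynomial.support_monomial, if_neg (MvPolynomial.mem_support_iff.mp hdA)] at hν'
    rw [Finset.mem_singleton.mp hν', tsub_add_cancel_of_le hle]
    exact hdA

end Chunk3


section Chunk4a
variable {k : Type*} [Field k] {r m : ℕ}

lemma S5_finsupp_sum_zero {d : Fin r →₀ ℕ} (h : (d.sum fun _ e => e) = 0) : d = 0 := by
  ext i
  rw [Finsupp.sum] at h
  by_cases hi : i ∈ d.support
  · exact absurd (Finset.sum_eq_zero_iff.mp h i hi) (Finsupp.mem_support_iff.mp hi)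
  · simpa using Finsupp.notMem_support_iff.mp hi

lemma S5_isHomog_eK (S : Finset (Fin r)) :
    IsHomogC m ((2 * m + 1) * S.card) (eK k S) := by
  intro T d hd
  rw [eK_apply] at hd
  by_cases h : T = S
  · rw [if_pos h] at hd
    have hd0 : d = 0 := by
      by_contra hne
      refine MvPolynomial.mem_support_iff.mp hd ?_
      rw [MvPolynomial.coeff_one, if_neg fun h' => hne h'.symm]
    subst hd0
    rw [h]
    simp
  · rw [if_neg h] at hd
    simp at hd

lemma S5_gamma_empty (γ : Kmod k r →ₗ[MvPolynomial (Fin r) k] Kmod k r)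
    (hlift : ∀ z : Kmod k r, koszulD k r m z = 0 →
      constantCoeff (γ z ∅) = constantCoeff (z ∅))
    (hdeg : ∀ (n : ℕ) (f : Kmod k r), IsHomogC m n f → IsHomogC 0 n (γ f)) :
    γ (eK k ∅) = eK k ∅ := by
  have h0 : IsHomogC m 0 (eK k (∅ : Finset (Fin r))) := by
    have := S5_isHomog_eK (k := k) (m := m) (∅ : Finset (Fin r))
    simpa using this
  have h1 := hdeg 0 _ h0
  have hS : ∀ S : Finset (Fin r), S ≠ ∅ → γ (eK k ∅) S = 0 := by
    intro S hSne
    by_contra hne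
    obtain ⟨d, hd⟩ := MvPolynomial.support_nonempty.mpr hne
    have hh := h1 S d hd
    have hcard : S.card ≠ 0 := by simpa [Finset.card_eq_zero] using hSne
    omega
  have hconst : ∀ d ∈ (γ (eK k ∅) ∅).support, d = 0 := by
    intro d hd
    have hh := h1 ∅ d hd
    refine S5_finsupp_sum_zero ?_
    simp at hh
    omega
  have hcc : constantCoeff (γ (eK k ∅) ∅) = 1 := by
    rw [hlift (eK k ∅) koszulD_eK_empty, eK_apply, if_pos rfl, map_one]
  funext S
  by_cases h : S = ∅
  · subst h
    rw [eK_apply, if_pos rfl]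
    have hC : γ (eK k ∅) ∅ = C (constantCoeff (γ (eK k ∅) ∅)) := by
      apply MvPolynomial.ext
      intro d
      by_cases hd : d = 0
      · subst hd
        rw [MvPolynomial.coeff_C, if_pos rfl, constantCoeff_eq]
      · rw [MvPolynomial.coeff_C, if_neg fun h' => hd h'.symm]
        by_contra hne
        exact hd (hconst d (MvPolynomial.mem_support_iff.mpr hne))
    rw [hC, hcc, map_one]
  · rw [hS S h, eK_apply, if_neg h]

end Chunk4a


section Chunk4b
variable {k : Type*} [Field k] {r m : ℕ}

lemma S5_apply_le_sum (d : Fin r →₀ ℕ) (j : Fin r) : d j ≤ d.sum fun _ e => e := by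
  by_cases hj : j ∈ d.support
  · exact Finset.single_le_sum (fun i _ => Nat.zero_le _) hj
  · simp [Finsupp.notMem_support_iff.mp hj]

lemma S5_disjoint_pow {j1 j2 : Fin r} (hne : j2 ≠ j1) (c : ℕ)
    (P Q : MvPolynomial (Fin r) k)
    (hP : ∀ ν ∈ P.support, ν j2 < c)
    (heq : X j1 ^ c * P = X j2 ^ c * Q) : P = 0 := by
  by_contra hP0
  obtain ⟨ν, hν⟩ := MvPolynomial.support_nonempty.mpr hP0
  have h1 : MvPolynomial.coeff (Finsupp.single j1 c + ν) (X j1 ^ c * P)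
      = MvPolynomial.coeff ν P := by
    rw [X_pow_eq_monomial, MvPolynomial.coeff_monomial_mul, one_mul]
  have h2 : MvPolynomial.coeff (Finsupp.single j1 c + ν) (X j2 ^ c * Q) = 0 := by
    rw [X_pow_eq_monomial, MvPolynomial.coeff_monomial_mul', if_neg]
    rw [Finsupp.single_le_iff, Finsupp.add_apply, Finsupp.single_apply, if_neg hne.symm,
      zero_add]
    exact Nat.not_le.mpr (hP ν hν)
  rw [heq, h2] at h1
  exact MvPolynomial.mem_support_iff.mp hν h1.symm

lemma S5_sum_single_add (μ : Fin r →₀ ℕ) (i : Fin r) (c : ℕ) :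
    ((Finsupp.single i c + μ).sum fun _ e => e) = c + μ.sum fun _ e => e := by
  rw [Finsupp.sum_add_index' (fun _ => rfl) (fun _ b₁ b₂ => rfl),
    Finsupp.sum_single_index rfl]

lemma S5_sum_add_single (μ : Fin r →₀ ℕ) (i : Fin r) (c : ℕ) :
    ((μ + Finsupp.single i c).sum fun _ e => e) = (μ.sum fun _ e => e) + c := by
  rw [Finsupp.sum_add_index' (fun _ => rfl) (fun _ b₁ b₂ => rfl),
    Finsupp.sum_single_index rfl]

lemma S5_sign_eval (l i : Fin r) :
    ((-1 : MvPolynomial (Fin r) k) ^ (({l} : Finset (Fin r)).filter (fun j => j < i)).card)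
      = if l < i then -1 else 1 := by
  rw [Finset.filter_singleton]
  by_cases h : l < i
  · rw [if_pos h, if_pos h, Finset.card_singleton, pow_one]
  · rw [if_neg h, if_neg h, Finset.card_empty, pow_zero]

end Chunk4b


section Chunk4c
variable {k : Type*} [Field k] {r m : ℕ}

lemma S5_no_b (γ : Kmod k r →ₗ[MvPolynomial (Fin r) k] Kmod k r)
    (hchain : γ ∘ₗ koszulD k r m = koszulD k r 0 ∘ₗ γ)
    (hdeg : ∀ (n : ℕ) (f : Kmod k r), IsHomogC m n f → IsHomogC 0 n (γ f))
    (hg0 : γ (eK k ∅) = eK k ∅)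
    {i0 i1 i2 : Fin r} (h01 : i0 < i1) (h12 : i1 < i2)
    (hvan : ∀ S : Finset (Fin r), S ≠ ∅ →
      X i0 ^ (m + 1) * γ (eK k {i1, i2}) S - X i1 ^ (m + 1) * γ (eK k {i0, i2}) S
        + X i2 ^ (m + 1) * γ (eK k {i0, i1}) S = 0) : False := by
  classical
  have h02 : i0 < i2 := h01.trans h12
  set A : Kmod k r := γ (eK k {i1, i2}) with hAdef
  set Y1 : Kmod k r := γ (eK k {i1}) with hY1def
  set Y2 : Kmod k r := γ (eK k {i2}) with hY2def
  have hcard2 : ∀ i l : Fin r, i ∉ ({l} : Finset (Fin r)) → (insert i ({l} : Finset (Fin r))).card = 2 :=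
    fun i l hi => by rw [Finset.card_insert_of_notMem hi, Finset.card_singleton]
  have hcardp : ({i1, i2} : Finset (Fin r)).card = 2 :=
    hcard2 i1 i2 (by simp [Finset.mem_singleton]; exact h12.ne)
  -- homogeneity of Y1, Y2 at singletons
  have hm1 : ∀ (l : Fin r), ∀ d ∈ (Y1 {l}).support, (d.sum fun _ e => e) = m := by
    intro l d hd
    have h := hdeg _ _ (S5_isHomog_eK (k := k) (m := m) {i1}) {l} d hd
    rw [Finset.card_singleton, Finset.card_singleton] at h
    omega
  have hm2 : ∀ (l : Fin r), ∀ d ∈ (Y2 {l}).support, (d.sum fun _ e => e) = m := by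
    intro l d hd
    have h := hdeg _ _ (S5_isHomog_eK (k := k) (m := m) {i2}) {l} d hd
    rw [Finset.card_singleton, Finset.card_singleton] at h
    omega
  have hmA : ∀ S : Finset (Fin r), S.card = 2 → ∀ d ∈ (A S).support,
      (d.sum fun _ e => e) = 2 * m := by
    intro S hS2 d hd
    have h := hdeg _ _ (S5_isHomog_eK (k := k) (m := m) {i1, i2}) S d hd
    rw [hcardp, hS2] at h
    omega
  -- split A S at 2-sets
  have hsplitS : ∀ S : Finset (Fin r), S.card = 2 →
      ∃ α β : MvPolynomial (Fin r) k,
        A S = X i1 ^ (m + 1) * α + X i2 ^ (m + 1) * β ∧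
        (∀ ν ∈ α.support, ν + Finsupp.single i1 (m + 1) ∈ (A S).support) ∧
        (∀ ν ∈ β.support, ν + Finsupp.single i2 (m + 1) ∈ (A S).support) := by
    intro S hS2
    refine S5_split i1 i2 (m + 1) (A S) ?_
    refine S5_support_ge (h01.ne) (h02.ne) (m + 1) (A S)
      (γ (eK k {i0, i2}) S) (-(γ (eK k {i0, i1}) S)) ?_
    have hne : S ≠ ∅ := by
      intro h; rw [h, Finset.card_empty] at hS2; omega
    linear_combination hvan S hne
  choose α0 β0 hab0 hs10 hs20 using hsplitS
  set α : Finset (Fin r) → MvPolynomial (Fin r) k :=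
    fun S => if h : S.card = 2 then α0 S h else 0 with hαdef
  set β : Finset (Fin r) → MvPolynomial (Fin r) k :=
    fun S => if h : S.card = 2 then β0 S h else 0 with hβdef
  have hab : ∀ S : Finset (Fin r), S.card = 2 →
      A S = X i1 ^ (m + 1) * α S + X i2 ^ (m + 1) * β S := by
    intro S h
    rw [hαdef, hβdef]
    simp only [dif_pos h]
    exact hab0 S h
  have hs1 : ∀ S : Finset (Fin r), S.card = 2 →
      ∀ ν ∈ (α S).support, ν + Finsupp.single i1 (m + 1) ∈ (A S).support := by
    intro S h
    rw [hαdef]; simp only [dif_pos h]; exact hs10 S h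
  -- chain identity for A
  have hch : koszulD k r 0 A =
      (X i1 ^ (m + 1) : MvPolynomial (Fin r) k) • Y2
        - (X i2 ^ (m + 1) : MvPolynomial (Fin r) k) • Y1 := by
    have h := LinearMap.ext_iff.mp hchain (eK k {i1, i2})
    simp only [LinearMap.comp_apply] at h
    rw [koszulD_eK_pair h12, map_sub, LinearMap.map_smul, LinearMap.map_smul] at h
    exact h.symm
  have hchl : ∀ l : Fin r,
      ∑ i ∈ ({l} : Finset (Fin r))ᶜ,
        (if l < i then (-1 : MvPolynomial (Fin r) k) else 1) * X i * A (insert i {l})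
      = X i1 ^ (m + 1) * Y2 {l} - X i2 ^ (m + 1) * Y1 {l} := by
    intro l
    have h := congrFun hch {l}
    rw [koszulD_apply] at h
    have hL : ∀ i ∈ ({l} : Finset (Fin r))ᶜ,
        ((-1 : MvPolynomial (Fin r) k) ^ (({l} : Finset (Fin r)).filter (fun j => j < i)).card
          * X i ^ (0 + 1)) * A (insert i {l})
        = (if l < i then (-1 : MvPolynomial (Fin r) k) else 1) * X i * A (insert i {l}) := by
      intro i _
      rw [S5_sign_eval, pow_one]
    rw [Finset.sum_congr rfl hL] at h
    rw [h]
    simp [smul_eq_mul]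
  -- the two combination sums
  set SA : Fin r → MvPolynomial (Fin r) k := fun l =>
    ∑ i ∈ ({l} : Finset (Fin r))ᶜ,
      (if l < i then (-1 : MvPolynomial (Fin r) k) else 1) * X i * α (insert i {l}) with hSAdef
  set SB : Fin r → MvPolynomial (Fin r) k := fun l =>
    ∑ i ∈ ({l} : Finset (Fin r))ᶜ,
      (if l < i then (-1 : MvPolynomial (Fin r) k) else 1) * X i * β (insert i {l}) with hSBdef
  have hkey : ∀ l : Fin r,
      X i1 ^ (m + 1) * (SA l - Y2 {l}) = X i2 ^ (m + 1) * (-(SB l) - Y1 {l}) := by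
    intro l
    have hsub : ∑ i ∈ ({l} : Finset (Fin r))ᶜ,
        (if l < i then (-1 : MvPolynomial (Fin r) k) else 1) * X i * A (insert i {l})
        = X i1 ^ (m + 1) * SA l + X i2 ^ (m + 1) * SB l := by
      rw [hSAdef, hSBdef]
      simp only
      rw [Finset.mul_sum, Finset.mul_sum, ← Finset.sum_add_distrib]
      refine Finset.sum_congr rfl fun i hi => ?_
      rw [hab (insert i {l}) (hcard2 i l (Finset.mem_compl.mp hi))]
      ring
    linear_combination (hchl l) - hsub
  -- support bound and vanishing
  have hPzero : ∀ l : Fin r, SA l - Y2 {l} = 0 := by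
    intro l
    refine S5_disjoint_pow (h12.ne).symm (m + 1) _ _ ?_ (hkey l)
    intro ν hν
    have hν' := MvPolynomial.support_sub _ _ _ hν
    rw [Finset.mem_union] at hν'
    have hbound : (ν.sum fun _ e => e) = m := by
      rcases hν' with hν' | hν'
      · -- ν in support of SA l
        rw [hSAdef] at hν'
        simp only at hν'
        obtain ⟨i, hi, hνi⟩ := Finset.mem_biUnion.mp (MvPolynomial.support_sum hν')
        have hxα : ν ∈ (X i * α (insert i {l})).support := by
          by_cases hli : l < i
          · rw [if_pos hli, neg_one_mul, neg_mul, MvPolynomial.support_neg] at hνi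
            exact hνi
          · rw [if_neg hli, one_mul] at hνi
            exact hνi
        have hc := MvPolynomial.mem_support_iff.mp hxα
        rw [MvPolynomial.coeff_X_mul'] at hc
        by_cases hmem : i ∈ ν.support
        · rw [if_pos hmem] at hc
          set μ := ν - Finsupp.single i 1 with hμdef
          have hμ : μ ∈ (α (insert i {l})).support := MvPolynomial.mem_support_iff.mpr hc
          have hrec : ν = Finsupp.single i 1 + μ := by
            rw [hμdef, add_comm, tsub_add_cancel_of_le]
            rw [Finsupp.single_le_iff]
            exact Nat.one_le_iff_ne_zero.mpr (Finsupp.mem_support_iff.mp hmem)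
          have hd := hs1 (insert i {l}) (hcard2 i l (Finset.mem_compl.mp hi)) μ hμ
          have hdsum := hmA (insert i {l}) (hcard2 i l (Finset.mem_compl.mp hi)) _ hd
          rw [S5_sum_add_single] at hdsum
          rw [hrec, S5_sum_single_add]
          omega
        · rw [if_neg hmem] at hc
          exact absurd rfl hc
      · exact hm2 l ν hν'
    have := S5_apply_le_sum ν i2
    omega
  -- chain identity for Y2 at ∅
  have hch2 : ∑ j : Fin r, X j * Y2 {j} = X i2 ^ (m + 1) := by
    have h := LinearMap.ext_iff.mp hchain (eK k {i2})
    simp only [LinearMap.comp_apply] at h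
    rw [koszulD_eK_single, LinearMap.map_smul, hg0] at h
    have h2 := congrFun h.symm ∅
    rw [koszulD_apply] at h2
    have hL : ∀ j ∈ (∅ : Finset (Fin r))ᶜ,
        ((-1 : MvPolynomial (Fin r) k) ^ ((∅ : Finset (Fin r)).filter (fun x => x < j)).card
          * X j ^ (0 + 1)) * Y2 (insert j ∅) = X j * Y2 {j} := by
      intro j _
      rw [Finset.filter_empty, Finset.card_empty, pow_zero, one_mul, pow_one]
      rfl
    rw [Finset.sum_congr rfl hL, Finset.compl_empty] at h2
    rw [h2, Pi.smul_apply, eK_apply, if_pos rfl, smul_eq_mul, mul_one]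
  -- antisymmetric cancellation
  have hcancel : ∑ l : Fin r, X l * SA l = 0 := by
    rw [hSAdef]
    simp only
    have hrw : ∀ l : Fin r, X l * ∑ i ∈ ({l} : Finset (Fin r))ᶜ,
        (if l < i then (-1 : MvPolynomial (Fin r) k) else 1) * X i * α (insert i {l})
        = ∑ i ∈ ({l} : Finset (Fin r))ᶜ,
          (if l < i then (-1 : MvPolynomial (Fin r) k) else 1) * (X l * X i) * α (insert i {l}) := by
      intro l
      rw [Finset.mul_sum]
      exact Finset.sum_congr rfl fun i _ => by ring
    rw [Finset.sum_congr rfl fun l _ => hrw l]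
    rw [Finset.sum_sigma' Finset.univ (fun l => ({l} : Finset (Fin r))ᶜ)
      (fun l i => (if l < i then (-1 : MvPolynomial (Fin r) k) else 1) * (X l * X i)
        * α (insert i {l}))]
    refine Finset.sum_involution (fun p _ => ⟨p.2, p.1⟩) ?_ ?_ ?_ ?_
    · rintro ⟨l, i⟩ hp
      simp only
      have hne : l ≠ i := by
        have := Finset.mem_sigma.mp hp
        have h2 := Finset.mem_compl.mp this.2
        intro h; exact h2 (by rw [h]; exact Finset.mem_singleton_self i)
      have hset : insert l ({i} : Finset (Fin r)) = insert i ({l} : Finset (Fin r)) :=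
        Finset.pair_comm l i
      rw [hset]
      rcases lt_or_gt_of_ne hne with hlt | hgt
      · rw [if_pos hlt, if_neg (not_lt.mpr hlt.le)]
        ring
      · rw [if_neg (not_lt.mpr hgt.le), if_pos hgt]
        ring
    · rintro ⟨l, i⟩ hp hf
      have hne : l ≠ i := by
        have hsig := Finset.mem_sigma.mp hp
        have h2' := Finset.mem_compl.mp hsig.2
        intro h; exact h2' (by rw [h]; exact Finset.mem_singleton_self i)
      show (⟨i, l⟩ : Σ _ : Fin r, Fin r) ≠ ⟨l, i⟩
      simp only [ne_eq, Sigma.mk.inj_iff]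
      intro ⟨h1, h2⟩
      exact hne h1.symm
    · rintro ⟨l, i⟩ hp
      have hsig := Finset.mem_sigma.mp hp
      have h2 := Finset.mem_compl.mp hsig.2
      show (⟨i, l⟩ : Σ _ : Fin r, Fin r) ∈ Finset.univ.sigma fun l => ({l} : Finset (Fin r))ᶜ
      refine Finset.mem_sigma.mpr ⟨Finset.mem_univ _, Finset.mem_compl.mpr ?_⟩
      intro hmem
      exact h2 (Finset.mem_singleton.mpr (Finset.mem_singleton.mp hmem).symm)
    · rintro ⟨l, i⟩ hp
      rfl
  -- conclusion
  have hfin : (X i2 ^ (m + 1) : MvPolynomial (Fin r) k) = 0 := by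
    rw [← hch2]
    have : ∀ l : Fin r, X l * Y2 {l} = X l * SA l := by
      intro l
      have := hPzero l
      have h' : SA l = Y2 {l} := by linear_combination this
      rw [h']
    rw [Finset.sum_congr rfl fun l _ => this l]
    exact hcancel
  exact pow_ne_zero (m + 1) (MvPolynomial.X_ne_zero i2) hfin

end Chunk4c


section Chunk5
variable {k : Type*} [Field k] {r m : ℕ}

lemma S5_chain_empty (γ : Kmod k r →ₗ[MvPolynomial (Fin r) k] Kmod k r)
    (hchain : γ ∘ₗ koszulD k r m = koszulD k r 0 ∘ₗ γ)
    (hg0 : γ (eK k ∅) = eK k ∅) (i : Fin r) :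
    ∑ j : Fin r, γ (eK k {i}) {j} * X j = X i ^ (m + 1) := by
  have h := LinearMap.ext_iff.mp hchain (eK k {i})
  simp only [LinearMap.comp_apply] at h
  rw [koszulD_eK_single, LinearMap.map_smul, hg0] at h
  have h2 := congrFun h.symm ∅
  rw [koszulD_apply] at h2
  have hL : ∀ j ∈ (∅ : Finset (Fin r))ᶜ,
      ((-1 : MvPolynomial (Fin r) k) ^ ((∅ : Finset (Fin r)).filter (fun x => x < j)).card
        * X j ^ (0 + 1)) * γ (eK k {i}) (insert j ∅)
      = γ (eK k {i}) {j} * X j := by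
    intro j _
    rw [Finset.filter_empty, Finset.card_empty, pow_zero, one_mul, pow_one, mul_comm]
    rfl
  rw [Finset.sum_congr rfl hL, Finset.compl_empty] at h2
  rw [h2, Pi.smul_apply, eK_apply, if_pos rfl, smul_eq_mul, mul_one]

end Chunk5



theorem statement5 (k : Type*) [Field k] [CharZero k] (r m : ℕ) (hr : 3 ≤ r)
    (γ : Kmod k r →ₗ[MvPolynomial (Fin r) k] Kmod k r)
    -- γ commutes with the differentials
    (hchain : γ ∘ₗ koszulD k r m = koszulD k r 0 ∘ₗ γ)
    -- γ lifts the canonical projection H(K_r(m)) = R/(t^{m+1}) → H(K_r(0)) = k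
    (hlift : ∀ z : Kmod k r, koszulD k r m z = 0 →
      constantCoeff (γ z ∅) = constantCoeff (z ∅))
    -- γ preserves degrees (deg tᵢ = 2, deg sᵢ^m = 2m+1, deg sᵢ^0 = 1)
    (hdeg : ∀ (n : ℕ) (f : Kmod k r), IsHomogC m n f → IsHomogC 0 n (γ f)) :
    ∀ x ∈ Submodule.span (MvPolynomial (Fin r) k)
      (insert
        (eK k ({⟨0, by omega⟩, ⟨1, by omega⟩, ⟨2, by omega⟩} : Finset (Fin r)))
        {f : Kmod k r | ∃ i : Fin r, f = eK k {i}}),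
      γ x = 0 → x = 0 := by
  classical
  intro x hx hγx
  have hg0 : γ (eK k ∅) = eK k ∅ := S5_gamma_empty γ hlift hdeg
  set i0 : Fin r := ⟨0, by omega⟩ with hi0def
  set i1 : Fin r := ⟨1, by omega⟩ with hi1def
  set i2 : Fin r := ⟨2, by omega⟩ with hi2def
  have h01 : i0 < i1 := by rw [hi0def, hi1def, Fin.mk_lt_mk]; omega
  have h12 : i1 < i2 := by rw [hi1def, hi2def, Fin.mk_lt_mk]; omega
  set T : Finset (Fin r) := {i0, i1, i2} with hTdef
  have hT3 : T.card = 3 := by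
    rw [hTdef]
    rw [Finset.card_insert_of_notMem, Finset.card_insert_of_notMem, Finset.card_singleton]
    · simp only [Finset.mem_singleton]
      exact h12.ne
    · simp only [Finset.mem_insert, Finset.mem_singleton]
      push_neg
      exact ⟨h01.ne, (h01.trans h12).ne⟩
  -- the structure map L
  set L : Kmod k r →ₗ[MvPolynomial (Fin r) k] Kmod k r :=
    (∑ i : Fin r, (LinearMap.proj ({i} : Finset (Fin r))).smulRight (eK k {i}))
      + (LinearMap.proj T).smulRight (eK k T) with hLdef
  have hLval : ∀ f : Kmod k r, L f = (∑ i : Fin r, f {i} • eK k {i}) + f T • eK k T := by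
    intro f
    rw [hLdef]
    simp [LinearMap.sum_apply, LinearMap.smulRight_apply, LinearMap.proj_apply]
  have hLx : L x = x := by
    have hgen : (insert
        (eK k ({⟨0, by omega⟩, ⟨1, by omega⟩, ⟨2, by omega⟩} : Finset (Fin r)))
        {f : Kmod k r | ∃ i : Fin r, f = eK k {i}})
        ⊆ (LinearMap.ker (L - LinearMap.id) : Submodule (MvPolynomial (Fin r) k) (Kmod k r)) := by
      intro f hf
      rw [Set.mem_insert_iff] at hf
      rw [SetLike.mem_coe, LinearMap.mem_ker, LinearMap.sub_apply, LinearMap.id_apply,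
        sub_eq_zero]
      rcases hf with hf | ⟨i, rfl⟩
      · -- f = eK T
        have hfT : f = eK k T := hf
        rw [hfT, hLval]
        have hz : ∀ i : Fin r, eK k T {i} = 0 := by
          intro i
          rw [eK_apply, if_neg]
          intro hc
          have := congrArg Finset.card hc
          rw [Finset.card_singleton, hT3] at this
          omega
        rw [Finset.sum_eq_zero fun i _ => by rw [hz i, zero_smul], zero_add,
          eK_apply, if_pos rfl, one_smul]
      · rw [hLval]
        have hzT : eK k {i} T = 0 := by
          rw [eK_apply, if_neg]
          intro hc
          have := congrArg Finset.card hc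
          rw [Finset.card_singleton, hT3] at this
          omega
        rw [hzT, zero_smul, add_zero]
        rw [Finset.sum_eq_single i]
        · rw [eK_apply, if_pos rfl, one_smul]
        · intro j _ hji
          rw [eK_apply, if_neg, zero_smul]
          intro hc
          exact hji (Finset.singleton_injective hc)
        · intro hni; exact absurd (Finset.mem_univ i) hni
    have hmem := Submodule.span_le.mpr hgen hx
    rw [LinearMap.mem_ker, LinearMap.sub_apply, LinearMap.id_apply, sub_eq_zero] at hmem
    exact hmem
  set a : Fin r → MvPolynomial (Fin r) k := fun i => x {i} with hadef
  set b : MvPolynomial (Fin r) k := x T with hbdef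
  have hxrep : x = (∑ i : Fin r, a i • eK k {i}) + b • eK k T := by
    rw [← hLx, hLval]
  -- b = 0
  have hb : b = 0 := by
    by_contra hb
    refine S5_no_b γ hchain hdeg hg0 h01 h12 ?_
    intro S hSne
    have hDx2 : γ (koszulD k r m x) = 0 := by
      have h := LinearMap.ext_iff.mp hchain x
      simp only [LinearMap.comp_apply] at h
      rw [h, hγx, map_zero]
    have hDxval : koszulD k r m x = (∑ i : Fin r, (a i * X i ^ (m + 1)) • eK k ∅)
        + b • ((X i0 ^ (m + 1) : MvPolynomial (Fin r) k) • eK k {i1, i2}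
          - (X i1 ^ (m + 1) : MvPolynomial (Fin r) k) • eK k {i0, i2}
          + (X i2 ^ (m + 1) : MvPolynomial (Fin r) k) • eK k {i0, i1}) := by
      rw [hxrep, map_add, map_sum, LinearMap.map_smul]
      rw [hTdef, koszulD_eK_triple h01 h12]
      congr 1
      refine Finset.sum_congr rfl fun i _ => ?_
      rw [LinearMap.map_smul, koszulD_eK_single, smul_smul]
    have hγval : (∑ i : Fin r, (a i * X i ^ (m + 1)) • eK k ∅)
        + b • ((X i0 ^ (m + 1) : MvPolynomial (Fin r) k) • γ (eK k {i1, i2})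
          - (X i1 ^ (m + 1) : MvPolynomial (Fin r) k) • γ (eK k {i0, i2})
          + (X i2 ^ (m + 1) : MvPolynomial (Fin r) k) • γ (eK k {i0, i1})) = 0 := by
      rw [← hDx2, hDxval, map_add, map_sum, LinearMap.map_smul, map_add, map_sub,
        LinearMap.map_smul, LinearMap.map_smul, LinearMap.map_smul]
      congr 1
      refine Finset.sum_congr rfl fun i _ => ?_
      rw [LinearMap.map_smul, hg0]
    have hS := congrFun hγval S
    rw [Pi.add_apply, Finset.sum_apply, Pi.smul_apply] at hS
    have hz : ∀ i : Fin r, ((a i * X i ^ (m + 1)) • eK k ∅) S = 0 := by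
      intro i
      rw [Pi.smul_apply, eK_apply, if_neg hSne, smul_zero]
    rw [Finset.sum_eq_zero fun i _ => hz i, zero_add] at hS
    have hbr : ((X i0 ^ (m + 1) : MvPolynomial (Fin r) k) • γ (eK k {i1, i2})
          - (X i1 ^ (m + 1) : MvPolynomial (Fin r) k) • γ (eK k {i0, i2})
          + (X i2 ^ (m + 1) : MvPolynomial (Fin r) k) • γ (eK k {i0, i1})) S = 0 := by
      rcases mul_eq_zero.mp hS with h | h
      · exact absurd h hb
      · exact h
    rw [Pi.add_apply, Pi.sub_apply, Pi.smul_apply, Pi.smul_apply, Pi.smul_apply] at hbr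
    simpa [smul_eq_mul] using hbr
  -- a = 0
  have hγx2 : ∀ j : Fin r, ∑ i : Fin r, a i * γ (eK k {i}) {j} = 0 := by
    intro j
    have hx2 : γ x = ∑ i : Fin r, a i • γ (eK k {i}) := by
      rw [hxrep, hb, zero_smul, add_zero, map_sum]
      exact Finset.sum_congr rfl fun i _ => (LinearMap.map_smul γ (a i) (eK k {i}))
    have h := congrFun (hx2.symm.trans hγx) {j}
    rw [Finset.sum_apply, Pi.zero_apply] at h
    calc ∑ i : Fin r, a i * γ (eK k {i}) {j}
        = ∑ c : Fin r, (a c • γ (eK k {c})) {j} :=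
          Finset.sum_congr rfl fun i _ => by rw [Pi.smul_apply, smul_eq_mul]
      _ = 0 := h
  have ha : a = 0 := by
    set G : Matrix (Fin r) (Fin r) (MvPolynomial (Fin r) k) :=
      Matrix.of (fun i j => γ (eK k {i}) {j}) with hGdef
    refine S5_vecMul_eq_zero (m := m) G ?_ a ?_
    · intro i
      have := S5_chain_empty γ hchain hg0 i
      rw [← this]
      rfl
    · funext j
      rw [Pi.zero_apply, ← hγx2 j]
      rfl
  rw [hxrep, hb, zero_smul, add_zero]
  rw [show a = 0 from ha]  -- then sum of zeros
  rw [Finset.sum_eq_zero fun i _ => by rw [Pi.zero_apply, zero_smul]]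
end

section
/- Let H̃ ≅ H ⊗ R be a minimal model with boundary d̄. For each i = 1,...,r define λ_i: H → H by assigning to x ∈ H the coefficient of t_i in d̄(x). Then the maps λ_1,...,λ_r pairwise anti-commute (λ_iλ_j + λ_jλ_i = 0 for all i,j), and hence define an action of the exterior algebra Λ_k(λ_1,...,λ_r) on H. -/
/-!
Statement 8: let `H̃ ≅ H ⊗ R` be a minimal model (a free `R = k[t₁,…,t_r]`-cochain complex
`R ⊗ₖ H`, `H` a graded `k`-vector space, with `R`-linear boundary `d̄` of total degree 1,
`d̄ ∘ d̄ = 0`, whose constant part vanishes).  For `i = 1,…,r` let `λᵢ : H → H` assign to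
`x ∈ H` the coefficient of `tᵢ` in `d̄(x)`.  Then the `λᵢ` pairwise anti-commute
(`λᵢλⱼ + λⱼλᵢ = 0` for all `i, j`), and hence they define an action of the exterior algebra
`Λₖ(λ₁,…,λ_r)` on `H` (an algebra morphism from the exterior algebra on `k^r` to `End H`
sending the `i`-th generator to `λᵢ`).
-/


open MvPolynomial TensorProduct

/-- `R = k[t₁,…,t_r]`, graded with `deg tᵢ = 1`. -/
abbrev Rp (k : Type*) [Field k] (r : ℕ) := MvPolynomial (Fin r) k

variable (k : Type*) [Field k] (r : ℕ)
variable (H : Type*) [AddCommGroup H] [Module k H]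

/-- `x ↦ 1 ⊗ x : H → R ⊗ H`. -/
noncomputable def toT : H →ₗ[k] Rp k r ⊗[k] H := TensorProduct.mk k (Rp k r) H 1

/-- The augmentation `R → k`, `tᵢ ↦ 0`. -/
noncomputable def εR : Rp k r →ₗ[k] k := (aeval fun _ : Fin r => (0 : k)).toLinearMap

/-- The degree-`n` graded piece of `H̃ = R ⊗ₖ H` (`deg tᵢ = 1`), where `g` is the grading
of `H`: it is spanned by the tensors `q ⊗ x` with `q` homogeneous of degree `d`, `x ∈ H^j`
and `d + j = n`. -/
noncomputable def gradedPiece (g : ℤ → Submodule k H) (n : ℤ) :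
    Submodule k (Rp k r ⊗[k] H) :=
  Submodule.span k {z | ∃ (d : ℕ) (j : ℤ) (q : Rp k r) (x : H),
    q ∈ homogeneousSubmodule (Fin r) k d ∧ x ∈ g j ∧ (d : ℤ) + j = n ∧ z = q ⊗ₜ[k] x}

/-- The boundary `d̄` has total degree `1`. -/
def DegreeOne (g : ℤ → Submodule k H)
    (D : Rp k r ⊗[k] H →ₗ[Rp k r] Rp k r ⊗[k] H) : Prop :=
  ∀ (n : ℤ), ∀ z ∈ gradedPiece k r H g n, D z ∈ gradedPiece k r H g (n + 1)

/-- The constant part of the boundary vanishes (`d̄ ⊗_R k = 0`), i.e. the complex is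
minimal. -/
def MinimalB (D : Rp k r ⊗[k] H →ₗ[Rp k r] Rp k r ⊗[k] H) : Prop :=
  ∀ z : Rp k r ⊗[k] H, LinearMap.rTensor H (εR k r) (D z) = 0

/-- The `k`-linear extraction of the coefficient of `tᵢ`. -/
noncomputable def lcoeffR (i : Fin r) : Rp k r →ₗ[k] k where
  toFun q := coeff (Finsupp.single i 1) q
  map_add' p q := coeff_add _ p q
  map_smul' c p := coeff_smul _ c p

/-- `λᵢ : H → H`, the coefficient of `tᵢ` in `d̄(x)` (the linear part of the boundary). -/
noncomputable def lam (D : Rp k r ⊗[k] H →ₗ[Rp k r] Rp k r ⊗[k] H) (i : Fin r) :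
    H →ₗ[k] H :=
  (TensorProduct.lid k H).toLinearMap ∘ₗ LinearMap.rTensor H (lcoeffR k r i) ∘ₗ
    (D.restrictScalars k) ∘ₗ toT k r H

/-- The filtration `F_*` of Definition 3.1: `F₀(H) = 0` and
`F_{i+1}(H) = d̄⁻¹(F_i(H) ⊗ R) ∩ (H ⊗ k)`; `F_i(H̃) = F_i(H) ⊗ R` is its base change. -/
noncomputable def FH (D : Rp k r ⊗[k] H →ₗ[Rp k r] Rp k r ⊗[k] H) :
    ℕ → Submodule k H
  | 0 => ⊥
  | i + 1 =>
    Submodule.comap ((D.restrictScalars k) ∘ₗ toT k r H)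
      (Submodule.restrictScalars k ((FH D i).baseChange (Rp k r)))

/-- The length `ℓ(F_*(H̃))` of the filtration: the smallest `i` with `F_i = F_{i+1}`. -/
noncomputable def flen (D : Rp k r ⊗[k] H →ₗ[Rp k r] Rp k r ⊗[k] H) : ℕ :=
  sInf {i | FH k r H D i = FH k r H D (i + 1)}

/-- `(Λ⁺)^i H^q`: the iterates of the exterior-algebra action of `λ₁,…,λ_r` on `H^q`. -/
noncomputable def LPow (g : ℤ → Submodule k H)
    (D : Rp k r ⊗[k] H →ₗ[Rp k r] Rp k r ⊗[k] H) (q : ℤ) : ℕ → Submodule k H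
  | 0 => g q
  | i + 1 => ⨆ j : Fin r, (LPow g D q i).map (lam k r H D j)

/-- `ℓ_Λ(H^q)`: the least `i` with `(Λ⁺)^i H^q = 0`. -/
noncomputable def llen (g : ℤ → Submodule k H)
    (D : Rp k r ⊗[k] H →ₗ[Rp k r] Rp k r ⊗[k] H) (q : ℤ) : ℕ :=
  sInf {i | LPow k r H g D q i = ⊥}

-- my stuff
noncomputable def mylc (m : Fin r →₀ ℕ) : Rp k r →ₗ[k] k where
  toFun q := coeff m q
  map_add' p q := coeff_add _ p q
  map_smul' c p := coeff_smul _ c p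

noncomputable def Em (m : Fin r →₀ ℕ) : Rp k r ⊗[k] H →ₗ[k] H :=
  (TensorProduct.lid k H).toLinearMap ∘ₗ LinearMap.rTensor H (mylc k r m)

lemma Em_tmul (m : Fin r →₀ ℕ) (p : Rp k r) (x : H) :
    Em k r H m (p ⊗ₜ[k] x) = coeff m p • x := by
  simp [Em, mylc, TensorProduct.lid_tmul]



lemma Em_X_smul (j : Fin r) (m : Fin r →₀ ℕ) (w : Rp k r ⊗[k] H) :
    Em k r H m ((X j : Rp k r) • w) =
      if j ∈ m.support then Em k r H (m - Finsupp.single j 1) w else 0 := by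
  induction w using TensorProduct.induction_on with
  | zero => simp
  | tmul q y =>
      rw [smul_tmul', smul_eq_mul, Em_tmul, mul_comm, coeff_mul_X', Em_tmul]
      split <;> simp
  | add a b ha hb =>
      rw [map_add, smul_add, map_add, ha, hb]
      split <;> simp

lemma Em_C_smul (a : k) (m : Fin r →₀ ℕ) (w : Rp k r ⊗[k] H) :
    Em k r H m ((C a : Rp k r) • w) = a • Em k r H m w := by
  have : (C a : Rp k r) • w = a • w := by
    rw [← algebraMap_smul (Rp k r) a w]; rfl
  rw [this, map_smul]

lemma Em0_smul (p : Rp k r) (w : Rp k r ⊗[k] H) :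
    Em k r H 0 (p • w) = coeff 0 p • Em k r H 0 w := by
  induction p using MvPolynomial.induction_on with
  | C a => rw [Em_C_smul, coeff_zero_C]
  | add p q hp hq => rw [add_smul, map_add, hp, hq, coeff_add, add_smul]
  | mul_X p n hp =>
      rw [mul_comm, mul_smul, Em_X_smul, coeff_X_mul']
      simp

lemma Em1_smul (i : Fin r) (p : Rp k r) (w : Rp k r ⊗[k] H) :
    Em k r H (Finsupp.single i 1) (p • w) =
      coeff 0 p • Em k r H (Finsupp.single i 1) w
        + coeff (Finsupp.single i 1) p • Em k r H 0 w := by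
  induction p using MvPolynomial.induction_on with
  | C a =>
      rw [Em_C_smul]
      simp [coeff_C, eq_comm (a := (0 : Fin r →₀ ℕ)), Finsupp.single_eq_zero]
  | add p q hp hq =>
      rw [add_smul, map_add, hp, hq, coeff_add, coeff_add, add_smul, add_smul]; abel
  | mul_X p n hp =>
      rw [mul_comm, mul_smul, Em_X_smul, coeff_X_mul', coeff_X_mul']
      by_cases h : n = i
      · subst h
        simp only [Finsupp.support_single_ne_zero _ one_ne_zero, Finset.mem_singleton, if_pos rfl,
          Finsupp.mem_support_iff, Finsupp.coe_zero, Pi.zero_apply, ne_eq, not_true_eq_false,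
          if_false, tsub_self]
        rw [Em0_smul]
        simp
      · have hns : n ∉ (Finsupp.single i 1 : Fin r →₀ ℕ).support := by
          simp [Finsupp.support_single_ne_zero _ one_ne_zero, h]
        simp [hns, h]


lemma Em2a_smul (i : Fin r) (p : Rp k r) (w : Rp k r ⊗[k] H) (hw : Em k r H 0 w = 0) :
    Em k r H (Finsupp.single i 2) (p • w) =
      coeff 0 p • Em k r H (Finsupp.single i 2) w
        + coeff (Finsupp.single i 1) p • Em k r H (Finsupp.single i 1) w := by
  induction p using MvPolynomial.induction_on with
  | C a =>
      rw [Em_C_smul]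
      simp [coeff_C, eq_comm (a := (0 : Fin r →₀ ℕ)), Finsupp.single_eq_zero]
  | add p q hp hq =>
      rw [add_smul, map_add, hp, hq, coeff_add, coeff_add, add_smul, add_smul]; abel
  | mul_X p n hp =>
      rw [mul_comm, mul_smul, Em_X_smul, coeff_X_mul', coeff_X_mul']
      by_cases h : n = i
      · subst h
        have h21 : (Finsupp.single n 2 - Finsupp.single n 1 : Fin r →₀ ℕ)
            = Finsupp.single n 1 := by
          rw [← Finsupp.single_tsub]
        have h11 : (Finsupp.single n 1 - Finsupp.single n 1 : Fin r →₀ ℕ) = 0 := tsub_self _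
        simp only [Finsupp.support_single_ne_zero _ (two_ne_zero),
          Finsupp.support_single_ne_zero _ (one_ne_zero), Finset.mem_singleton, if_pos rfl,
          h21, h11]
        rw [Em1_smul, hw]
        simp
      · have hns2 : n ∉ (Finsupp.single i 2 : Fin r →₀ ℕ).support := by
          simp [Finsupp.support_single_ne_zero _ (two_ne_zero), h]
        have hns1 : n ∉ (Finsupp.single i 1 : Fin r →₀ ℕ).support := by
          simp [Finsupp.support_single_ne_zero _ (one_ne_zero), h]
        simp [hns2, hns1, h]

lemma Em2b_smul (i j : Fin r) (hij : i ≠ j) (p : Rp k r) (w : Rp k r ⊗[k] H)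
    (hw : Em k r H 0 w = 0) :
    Em k r H (Finsupp.single i 1 + Finsupp.single j 1) (p • w) =
      coeff 0 p • Em k r H (Finsupp.single i 1 + Finsupp.single j 1) w
        + coeff (Finsupp.single i 1) p • Em k r H (Finsupp.single j 1) w
        + coeff (Finsupp.single j 1) p • Em k r H (Finsupp.single i 1) w := by
  have hsum0 : (Finsupp.single i 1 + Finsupp.single j 1 : Fin r →₀ ℕ) ≠ 0 := by
    intro h
    have := DFunLike.congr_fun h i
    simp [Finsupp.single_apply, hij] at this
  induction p using MvPolynomial.induction_on with
  | C a =>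
      rw [Em_C_smul]
      simp [coeff_C, eq_comm (a := (0 : Fin r →₀ ℕ)), Finsupp.single_eq_zero, hsum0.symm,
        (Ne.symm hsum0)]
  | add p q hp hq =>
      rw [add_smul, map_add, hp, hq]
      simp only [coeff_add, add_smul]; abel
  | mul_X p n hp =>
      rw [mul_comm, mul_smul, Em_X_smul]
      have hmemiff : ∀ s : Fin r,
          (s ∈ (Finsupp.single i 1 + Finsupp.single j 1 : Fin r →₀ ℕ).support)
            ↔ (s = i ∨ s = j) := by
        intro s
        simp only [Finsupp.mem_support_iff, Finsupp.add_apply, Finsupp.single_apply]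
        constructor
        · intro h
          by_contra hc
          push_neg at hc
          simp [Ne.symm hc.1, Ne.symm hc.2] at h
        · rintro (rfl | rfl) <;> simp [hij, Ne.symm hij]
      by_cases h : n = i
      · subst h
        rw [if_pos ((hmemiff n).mpr (Or.inl rfl)), add_tsub_cancel_left, Em1_smul, hw]
        simp [coeff_X_mul', Finsupp.support_single_ne_zero _ one_ne_zero, hij, Ne.symm hij]
      · by_cases h' : n = j
        · subst h'
          rw [if_pos ((hmemiff n).mpr (Or.inr rfl)), add_tsub_cancel_right, Em1_smul, hw]
          simp [coeff_X_mul', Finsupp.support_single_ne_zero _ one_ne_zero, h]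
        · rw [if_neg (by rw [hmemiff]; tauto)]
          simp [coeff_X_mul', Finsupp.support_single_ne_zero _ one_ne_zero, h, h']


lemma mylc_zero_eq : mylc k r 0 = εR k r := by
  apply LinearMap.ext
  intro p
  show coeff 0 p = aeval (fun _ : Fin r => (0 : k)) p
  rw [show (fun _ : Fin r => (0 : k)) = (0 : Fin r → k) from rfl, aeval_zero,
    constantCoeff_eq]
  simp

variable (D : Rp k r ⊗[k] H →ₗ[Rp k r] Rp k r ⊗[k] H)

lemma Em0_D (hmin : MinimalB k r H D) (z : Rp k r ⊗[k] H) : Em k r H 0 (D z) = 0 := by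
  have : LinearMap.rTensor H (mylc k r 0) (D z) = 0 := by
    rw [mylc_zero_eq]; exact hmin z
  simp [Em, this]

lemma lam_eq (i : Fin r) (x : H) :
    lam k r H D i x = Em k r H (Finsupp.single i 1) (D ((1 : Rp k r) ⊗ₜ[k] x)) := rfl

lemma D_tmul (p : Rp k r) (x : H) : D (p ⊗ₜ[k] x) = p • D ((1 : Rp k r) ⊗ₜ[k] x) := by
  rw [← map_smul, smul_tmul', smul_eq_mul, mul_one]

lemma D_ksmul (c : k) (z : Rp k r ⊗[k] H) : D (c • z) = c • D z :=
  (D.restrictScalars k).map_smul c z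

lemma EmD2b (hmin : MinimalB k r H D) (i j : Fin r) (hij : i ≠ j) (z : Rp k r ⊗[k] H) :
    Em k r H (Finsupp.single i 1 + Finsupp.single j 1) (D z) =
      lam k r H D i (Em k r H (Finsupp.single j 1) z)
        + lam k r H D j (Em k r H (Finsupp.single i 1) z)
        + Em k r H (Finsupp.single i 1 + Finsupp.single j 1)
            (D ((1 : Rp k r) ⊗ₜ[k] Em k r H 0 z)) := by
  induction z using TensorProduct.induction_on with
  | zero => simp
  | tmul p x =>
      rw [D_tmul, Em2b_smul k r H i j hij p _ (Em0_D k r H D hmin _),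
        Em_tmul, Em_tmul, Em_tmul, map_smul, map_smul, tmul_smul, D_ksmul, map_smul,
        lam_eq, lam_eq]
      abel
  | add a b ha hb =>
      simp only [map_add, tmul_add, ha, hb]
      abel

lemma EmD2a (hmin : MinimalB k r H D) (i : Fin r) (z : Rp k r ⊗[k] H) :
    Em k r H (Finsupp.single i 2) (D z) =
      lam k r H D i (Em k r H (Finsupp.single i 1) z)
        + Em k r H (Finsupp.single i 2) (D ((1 : Rp k r) ⊗ₜ[k] Em k r H 0 z)) := by
  induction z using TensorProduct.induction_on with
  | zero => simp
  | tmul p x =>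
      rw [D_tmul, Em2a_smul k r H i p _ (Em0_D k r H D hmin _),
        Em_tmul, Em_tmul, map_smul, tmul_smul, D_ksmul, map_smul, lam_eq]
      abel
  | add a b ha hb =>
      simp only [map_add, tmul_add, ha, hb]
      abel

lemma lam_sq (hDD : D ∘ₗ D = 0) (hmin : MinimalB k r H D) (i : Fin r) (x : H) :
    lam k r H D i (lam k r H D i x) = 0 := by
  have hz : D (D ((1 : Rp k r) ⊗ₜ[k] x)) = 0 := by
    have := LinearMap.congr_fun hDD ((1 : Rp k r) ⊗ₜ[k] x)
    simpa using this
  have h := EmD2a k r H D hmin i (D ((1 : Rp k r) ⊗ₜ[k] x))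
  rw [hz, Em0_D k r H D hmin, tmul_zero, map_zero, map_zero, map_zero, add_zero,
    ← lam_eq] at h
  exact h.symm

lemma lam_anticomm (hDD : D ∘ₗ D = 0) (hmin : MinimalB k r H D) (i j : Fin r) (hij : i ≠ j)
    (x : H) : lam k r H D i (lam k r H D j x) + lam k r H D j (lam k r H D i x) = 0 := by
  have hz : D (D ((1 : Rp k r) ⊗ₜ[k] x)) = 0 := by
    have := LinearMap.congr_fun hDD ((1 : Rp k r) ⊗ₜ[k] x)
    simpa using this
  have h := EmD2b k r H D hmin i j hij (D ((1 : Rp k r) ⊗ₜ[k] x))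
  rw [hz, Em0_D k r H D hmin, tmul_zero, map_zero, map_zero, map_zero, add_zero,
    ← lam_eq, ← lam_eq] at h
  exact h.symm



theorem statement8 (k : Type*) [Field k] (r : ℕ)
    (H : Type*) [AddCommGroup H] [Module k H]
    (g : ℤ → Submodule k H) (hg : DirectSum.IsInternal g)
    (D : Rp k r ⊗[k] H →ₗ[Rp k r] Rp k r ⊗[k] H)
    (hDD : D ∘ₗ D = 0) (hdeg : DegreeOne k r H g D) (hmin : MinimalB k r H D) :
    (∀ i j : Fin r,
      lam k r H D i ∘ₗ lam k r H D j + lam k r H D j ∘ₗ lam k r H D i = 0) ∧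
    ∃ Φ : ExteriorAlgebra k (Fin r → k) →ₐ[k] Module.End k H,
      ∀ i : Fin r, Φ (ExteriorAlgebra.ι k (Pi.single i 1)) = lam k r H D i := by
  have hanti : ∀ i j : Fin r,
      lam k r H D i ∘ₗ lam k r H D j + lam k r H D j ∘ₗ lam k r H D i = 0 := by
    intro i j
    ext x
    by_cases hij : i = j
    · subst hij
      simp [lam_sq k r H D hDD hmin]
    · simpa using lam_anticomm k r H D hDD hmin i j hij x
  refine ⟨hanti, ?_⟩
  have hantiE : ∀ i j : Fin r,
      (lam k r H D i * lam k r H D j : Module.End k H)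
        + lam k r H D j * lam k r H D i = 0 := by
    intro i j
    rw [Module.End.mul_eq_comp, Module.End.mul_eq_comp]
    exact hanti i j
  have hsqE : ∀ i : Fin r, (lam k r H D i * lam k r H D i : Module.End k H) = 0 := by
    intro i
    ext x
    exact lam_sq k r H D hDD hmin i x
  set f : (Fin r → k) →ₗ[k] Module.End k H :=
    ∑ i : Fin r, (LinearMap.proj i : (Fin r → k) →ₗ[k] k).smulRight (lam k r H D i) with hfdef
  have hfapp : ∀ v : Fin r → k, f v = ∑ i : Fin r, v i • lam k r H D i := by
    intro v
    rw [hfdef]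
    simp [LinearMap.sum_apply]
  have hcond : ∀ v : Fin r → k, f v * f v = 0 := by
    intro v
    rw [hfapp, Finset.sum_mul_sum, ← Finset.sum_product']
    refine Finset.sum_ninvolution Prod.swap (fun p => ?_) (fun p hp => ?_)
      (fun p => Finset.mem_univ _) (fun p => Prod.swap_swap p)
    · show (v p.1 • lam k r H D p.1) * (v p.2 • lam k r H D p.2)
        + (v p.2 • lam k r H D p.2) * (v p.1 • lam k r H D p.1) = 0
      rw [smul_mul_smul_comm, smul_mul_smul_comm, mul_comm (v p.2) (v p.1), ← smul_add,
        hantiE p.1 p.2, smul_zero]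
    · intro hswap
      apply hp
      have h12 : p.2 = p.1 := congrArg Prod.fst hswap
      show (v p.1 • lam k r H D p.1) * (v p.2 • lam k r H D p.2) = 0
      rw [h12, smul_mul_smul_comm, hsqE p.1, smul_zero]
  refine ⟨ExteriorAlgebra.lift k ⟨f, hcond⟩, fun i => ?_⟩
  rw [ExteriorAlgebra.lift_ι_apply, hfapp]
  rw [Finset.sum_eq_single i (fun b _ hb => by
    rw [Pi.single_eq_of_ne hb, zero_smul]) (fun h => absurd (Finset.mem_univ i) h)]
  rw [Pi.single_eq_same, one_smul]
end

section
/- Let H̃ ≅ H ⊗ R be a minimal model with dim_k H nonzero and finite, equipped with the filtration F_* of Definition 3.1. Then for every i = 1,...,ℓ(F_*(H̃)) the boundary d̄: F_i(H̃) → F_{i-1}(H̃) induces a non-trivial map from F_i(H̃)/F_{i-1}(H̃) to F_{i-1}(H̃)/F_{i-2}(H̃) (for all i for which the target is nonzero, i.e. i ≥ 2). -/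
/-!
Statement 9 (Proposition 3.2(d)): let `H̃ ≅ H ⊗ R` be a minimal model with `dim_k H`
nonzero and finite, equipped with the filtration `F_*` of Definition 3.1
(`F₀(H̃) = 0`, `F_{i+1}(H) = d̄⁻¹(F_i(H̃)) ∩ (H ⊗ k)`, `F_{i+1}(H̃) = F_{i+1}(H) ⊗ R`).
Then for every `i = 1, …, ℓ(F_*(H̃))` the boundary `d̄ : F_i(H̃) → F_{i-1}(H̃)` induces a
non-trivial map `F_i(H̃)/F_{i-1}(H̃) → F_{i-1}(H̃)/F_{i-2}(H̃)` (for all `i` for which the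
target is nonzero, i.e. `i ≥ 2`); non-triviality is expressed by the existence of
`z ∈ F_i(H̃)` with `d̄ z ∉ F_{i-2}(H̃)`.
-/


open MvPolynomial TensorProduct

variable (k : Type*) [Field k] (r : ℕ)
variable (H : Type*) [AddCommGroup H] [Module k H]

lemma baseChange_mono' {R M : Type*} (A : Type*) [CommSemiring R] [Semiring A]
    [Algebra R A] [AddCommMonoid M] [Module R M] {p q : Submodule R M} (h : p ≤ q) :
    p.baseChange A ≤ q.baseChange A :=
  Submodule.baseChange_mono A h

theorem statement9 (k : Type*) [Field k] (r : ℕ)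
    (H : Type*) [AddCommGroup H] [Module k H]
    [FiniteDimensional k H] [Nontrivial H]
    (g : ℤ → Submodule k H) (hg : DirectSum.IsInternal g)
    (D : Rp k r ⊗[k] H →ₗ[Rp k r] Rp k r ⊗[k] H)
    (hDD : D ∘ₗ D = 0) (hdeg : DegreeOne k r H g D) (hmin : MinimalB k r H D) :
    ∀ i : ℕ, 2 ≤ i → i ≤ flen k r H D →
      ∃ z ∈ (FH k r H D i).baseChange (Rp k r),
        D z ∉ (FH k r H D (i - 2)).baseChange (Rp k r) := by
  intro i h2 hle
  have hmono : ∀ j : ℕ, FH k r H D j ≤ FH k r H D (j+1) := by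
    intro j
    induction j with
    | zero => exact bot_le
    | succ n ih =>
      show FH k r H D (n+1) ≤ FH k r H D (n+1+1)
      simp only [FH]
      exact Submodule.comap_mono
        (fun _ hz => baseChange_mono' _ ih hz)
  have hne : FH k r H D (i-1) ≠ FH k r H D i := by
    have hlt : i - 1 < flen k r H D := by omega
    have h := Nat.notMem_of_lt_sInf hlt
    simp only [Set.mem_setOf_eq] at h
    have h' : FH k r H D (i-1) ≠ FH k r H D (i-1+1) := h
    rwa [Nat.sub_add_cancel (by omega)] at h'
  have hle' : FH k r H D (i-1) ≤ FH k r H D i := by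
    have := hmono (i-1)
    rwa [Nat.sub_add_cancel (by omega)] at this
  obtain ⟨x, hxi, hxnot⟩ := SetLike.exists_of_lt (lt_of_le_of_ne hle' hne)
  refine ⟨(1 : Rp k r) ⊗ₜ[k] x, Submodule.tmul_mem_baseChange_of_mem _ hxi, ?_⟩
  intro hD
  apply hxnot
  have hi : i - 1 = (i - 2) + 1 := by omega
  rw [hi]
  show x ∈ FH k r H D ((i-2)+1)
  simp only [FH, Submodule.mem_comap, LinearMap.comp_apply]
  exact hD
end

section
/- Let H̃ ≅ H ⊗ R be a minimal model with dim_k H nonzero and finite. If the action of the exterior algebra Λ on H is trivial, i.e. the terms of the boundary d̄ that are linear in the t_i vanish, then the number of degrees q with H^q ≠ 0 is at least ℓ(F_*(H̃)). -/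
/-!
Statement 11 (Proposition 3.2(f)): let `H̃ ≅ H ⊗ R` be a minimal model with `dim_k H`
nonzero and finite.  If the action of the exterior algebra `Λ` on `H` is trivial, i.e. the
terms of the boundary `d̄` that are linear in the `tᵢ` vanish (all `λᵢ = 0`), then the
number of degrees `q` with `H^q ≠ 0` is at least `ℓ(F_*(H̃))`.
-/


open MvPolynomial TensorProduct

variable (k : Type*) [Field k] (r : ℕ)
variable (H : Type*) [AddCommGroup H] [Module k H]

/-! ### Auxiliary machinery for the proof -/

section AuxST11
variable (k : Type*) [Field k] (r : ℕ) (H : Type*) [AddCommGroup H] [Module k H]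

/-- Extraction of the coefficient of the monomial `m` of an element of `R ⊗ H`. -/
noncomputable def cT (m : Fin r →₀ ℕ) : Rp k r ⊗[k] H →ₗ[k] H :=
  (TensorProduct.lid k H).toLinearMap ∘ₗ LinearMap.rTensor H (MvPolynomial.lcoeff k m)

variable {k r H} in
lemma cT_tmul (m : Fin r →₀ ℕ) (p : Rp k r) (x : H) :
    cT k r H m (p ⊗ₜ[k] x) = MvPolynomial.coeff m p • x := by
  simp [cT]

/-- `R ⊗ H` is, as a `k`-module, the module of finitely supported families of elements
of `H` indexed by monomials. -/
noncomputable def EE : Rp k r ⊗[k] H ≃ₗ[k] ((Fin r →₀ ℕ) →₀ H) :=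
  (TensorProduct.congr (MvPolynomial.basisMonomials (Fin r) k).repr (LinearEquiv.refl k H)).trans
    (TensorProduct.finsuppScalarLeft k H (Fin r →₀ ℕ))

variable {k r H} in
lemma EE_apply (m : Fin r →₀ ℕ) (z : Rp k r ⊗[k] H) :
    EE k r H z m = cT k r H m z := by
  induction z using TensorProduct.induction_on with
  | zero => simp
  | tmul p x =>
      simp [EE, cT_tmul, MvPolynomial.basisMonomials, MvPolynomial.coeff]
  | add a b ha hb => simp [map_add, ha, hb]

variable {k r H} in
lemma mem_baseChange_of {N : Submodule k H} {z : Rp k r ⊗[k] H}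
    (h : ∀ m, cT k r H m z ∈ N) : z ∈ N.baseChange (Rp k r) := by
  have hz : z = ((EE k r H) z).sum fun m y => (MvPolynomial.monomial m (1 : k)) ⊗ₜ[k] y := by
    conv_lhs => rw [← (EE k r H).symm_apply_apply z, ← Finsupp.sum_single (EE k r H z)]
    rw [map_finsuppSum]
    refine Finsupp.sum_congr fun m hm => ?_
    show (EE k r H).symm _ = _
    rw [EE, LinearEquiv.trans_symm, LinearEquiv.trans_apply,
      TensorProduct.finsuppScalarLeft_symm_apply_single, TensorProduct.congr_symm_tmul]
    congr 1
  rw [hz]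
  refine Submodule.sum_mem _ fun m hm => ?_
  exact Submodule.tmul_mem_baseChange_of_mem _ (by rw [EE_apply]; exact h m)

variable {k r H} in
lemma coeff_mem_graded {g : ℤ → Submodule k H} {n : ℤ} {z : Rp k r ⊗[k] H}
    (hz : z ∈ gradedPiece k r H g n) (m : Fin r →₀ ℕ) :
    cT k r H m z ∈ g (n - ((Finsupp.degree m : ℕ) : ℤ)) := by
  induction hz using Submodule.span_induction with
  | mem w hw =>
      obtain ⟨d, j, q, x, hq, hx, hdj, rfl⟩ := hw
      rw [cT_tmul]
      by_cases hc : MvPolynomial.coeff m q = 0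
      · rw [hc, zero_smul]; exact Submodule.zero_mem _
      · have hd : (Finsupp.weight (1 : Fin r → ℕ)) m = d := hq hc
        have hdeg : Finsupp.degree m = d := by
          rw [Finsupp.degree_eq_weight_one]; exact hd
        have : n - ((Finsupp.degree m : ℕ) : ℤ) = j := by rw [hdeg]; omega
        rw [this]
        exact Submodule.smul_mem _ _ hx
  | zero => simp
  | add a b _ _ ha hb => rw [map_add]; exact Submodule.add_mem _ ha hb
  | smul c a _ ha => rw [map_smul]; exact Submodule.smul_mem _ _ ha

variable {r} in
lemma degree_le_one_cases (m : Fin r →₀ ℕ) (h : Finsupp.degree m ≤ 1) :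
    m = 0 ∨ ∃ i, m = Finsupp.single i 1 := by
  interval_cases hd : Finsupp.degree m
  · exact Or.inl ((Finsupp.degree_eq_zero_iff m).mp hd)
  · right
    have hc : Multiset.card (Finsupp.toMultiset m) = 1 := by
      rw [Finsupp.card_toMultiset]; exact hd
    obtain ⟨a, ha⟩ := Multiset.card_eq_one.mp hc
    refine ⟨a, ?_⟩
    have h2 := Finsupp.toMultiset_toFinsupp m
    rw [ha, Multiset.toFinsupp_singleton] at h2
    exact h2.symm

variable {k r} in
lemma εR_eq_lcoeff : εR k r = MvPolynomial.lcoeff k (0 : Fin r →₀ ℕ) := by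
  ext p
  simp [εR, MvPolynomial.constantCoeff_monomial]
  rw [MvPolynomial.constantCoeff_eq]

variable {k r} in
lemma lcoeffR_eq (i : Fin r) : lcoeffR k r i = MvPolynomial.lcoeff k (Finsupp.single i 1) := rfl

variable {k r H} in
lemma toT_mem_graded {g : ℤ → Submodule k H} {q : ℤ} {x : H} (hx : x ∈ g q) :
    toT k r H x ∈ gradedPiece k r H g q :=
  Submodule.subset_span ⟨0, q, 1, x, MvPolynomial.isHomogeneous_one _ _, hx, by simp, rfl⟩

variable {k r H} in
lemma baseChange_mono'_s11 {N N' : Submodule k H} (h : N ≤ N') :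
    N.baseChange (Rp k r) ≤ N'.baseChange (Rp k r) := by
  exact Submodule.baseChange_mono _ h

variable {k r H} in
lemma FH_mono (D : Rp k r ⊗[k] H →ₗ[Rp k r] Rp k r ⊗[k] H) : Monotone (FH k r H D) := by
  apply monotone_nat_of_le_succ
  intro i
  induction i with
  | zero => exact bot_le
  | succ i ih =>
      show FH k r H D (i + 1) ≤ FH k r H D (i + 1 + 1)
      exact Submodule.comap_mono fun z hz =>
        (Submodule.restrictScalars_mem _ _ _).mpr
          (baseChange_mono'_s11 ih ((Submodule.restrictScalars_mem _ _ _).mp hz))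

variable {k r H} in
lemma mem_FH_succ {D : Rp k r ⊗[k] H →ₗ[Rp k r] Rp k r ⊗[k] H} {i : ℕ} {x : H}
    (h : ∀ m, cT k r H m (D (toT k r H x)) ∈ FH k r H D i) : x ∈ FH k r H D (i + 1) := by
  show x ∈ Submodule.comap ((D.restrictScalars k) ∘ₗ toT k r H)
      (Submodule.restrictScalars k ((FH k r H D i).baseChange (Rp k r)))
  rw [Submodule.mem_comap]
  exact (Submodule.restrictScalars_mem _ _ _).mpr (mem_baseChange_of h)

variable {k r H} in
lemma FH_succ_top {D : Rp k r ⊗[k] H →ₗ[Rp k r] Rp k r ⊗[k] H} {i : ℕ}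
    (h : FH k r H D i = ⊤) : FH k r H D (i + 1) = ⊤ := by
  rw [eq_top_iff]
  intro x _
  show x ∈ Submodule.comap ((D.restrictScalars k) ∘ₗ toT k r H)
      (Submodule.restrictScalars k ((FH k r H D i).baseChange (Rp k r)))
  rw [h, Submodule.baseChange_top]
  trivial

end AuxST11
theorem statement11 (k : Type*) [Field k] (r : ℕ)
    (H : Type*) [AddCommGroup H] [Module k H]
    [FiniteDimensional k H] [Nontrivial H]
    (g : ℤ → Submodule k H) (hg : DirectSum.IsInternal g)
    (D : Rp k r ⊗[k] H →ₗ[Rp k r] Rp k r ⊗[k] H)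
    (hDD : D ∘ₗ D = 0) (hdeg : DegreeOne k r H g D) (hmin : MinimalB k r H D)
    (htriv : ∀ i : Fin r, lam k r H D i = 0) :
    flen k r H D ≤ Set.ncard {q : ℤ | g q ≠ ⊥} := by
  classical
  haveI : IsNoetherian k H := IsNoetherian.iff_fg.mpr inferInstance
  set S : Set ℤ := {q : ℤ | g q ≠ ⊥} with hSdef
  have hS : S.Finite := Submodule.finite_ne_bot_of_iSupIndep hg.submodule_iSupIndep
  have hfin : ∀ q : ℤ, ({p : ℤ | g p ≠ ⊥ ∧ p < q}).Finite :=
    fun q => hS.subset fun p hp => hp.1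
  -- The key step: if everything of lower degree is in `F_N`, then `H^q ⊆ F_{N+1}`.
  have key : ∀ (N : ℕ) (q : ℤ), (∀ j : ℤ, j < q → g j ≤ FH k r H D N) →
      g q ≤ FH k r H D (N + 1) := by
    intro N q hlow x hx
    apply mem_FH_succ
    intro m
    have hgr : D (toT k r H x) ∈ gradedPiece k r H g (q + 1) :=
      hdeg q _ (toT_mem_graded hx)
    by_cases hm : Finsupp.degree m ≤ 1
    · rcases degree_le_one_cases m hm with rfl | ⟨i, rfl⟩
      · have h0 : cT k r H 0 (D (toT k r H x)) = 0 := by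
          have hz := hmin (toT k r H x)
          rw [εR_eq_lcoeff] at hz
          simp only [cT, LinearMap.coe_comp, Function.comp_apply, LinearEquiv.coe_coe]
          rw [hz, map_zero]
        rw [h0]; exact Submodule.zero_mem _
      · have h1 : cT k r H (Finsupp.single i 1) (D (toT k r H x)) = 0 := by
          have hz := LinearMap.congr_fun (htriv i) x
          simp only [lam, LinearMap.coe_comp, Function.comp_apply, LinearEquiv.coe_coe,
            LinearMap.zero_apply, LinearMap.coe_restrictScalars] at hz
          simp only [cT, LinearMap.coe_comp, Function.comp_apply, LinearEquiv.coe_coe]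
          rw [← lcoeffR_eq]
          exact hz
        rw [h1]; exact Submodule.zero_mem _
    · push_neg at hm
      have hcm := coeff_mem_graded hgr m
      have hj : (q + 1 : ℤ) - ((Finsupp.degree m : ℕ) : ℤ) < q := by
        have : (2 : ℤ) ≤ ((Finsupp.degree m : ℕ) : ℤ) := by exact_mod_cast hm
        omega
      exact hlow _ hj hcm
  -- By induction on the number of nonvanishing degrees below `q`.
  have count : ∀ (n : ℕ) (q : ℤ), ({p : ℤ | g p ≠ ⊥ ∧ p < q}).ncard = n →
      g q ≤ FH k r H D (n + 1) := by
    intro n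
    induction n using Nat.strong_induction_on with
    | _ n ih =>
      intro q hq
      apply key
      intro j hj
      by_cases hjb : g j = ⊥
      · rw [hjb]; exact bot_le
      · have hsub : insert j {p : ℤ | g p ≠ ⊥ ∧ p < j} ⊆ {p : ℤ | g p ≠ ⊥ ∧ p < q} := by
          intro p hp
          rcases Set.mem_insert_iff.mp hp with rfl | hp'
          · exact ⟨hjb, hj⟩
          · exact ⟨hp'.1, hp'.2.trans hj⟩
        have hcount : ({p : ℤ | g p ≠ ⊥ ∧ p < j}).ncard + 1 ≤ n := by
          have h1 : (insert j {p : ℤ | g p ≠ ⊥ ∧ p < j}).ncard =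
              ({p : ℤ | g p ≠ ⊥ ∧ p < j}).ncard + 1 :=
            Set.ncard_insert_of_notMem (by simp) (hfin j)
          have h2 : (insert j {p : ℤ | g p ≠ ⊥ ∧ p < j}).ncard ≤ ({p : ℤ | g p ≠ ⊥ ∧ p < q}).ncard :=
            Set.ncard_le_ncard hsub (hfin q)
          omega
        calc g j ≤ FH k r H D (({p : ℤ | g p ≠ ⊥ ∧ p < j}).ncard + 1) :=
              ih _ (by omega) j rfl
          _ ≤ FH k r H D n := FH_mono D hcount
  have htop : FH k r H D S.ncard = ⊤ := by
    rw [eq_top_iff, ← hg.submodule_iSup_eq_top]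
    refine iSup_le fun q => ?_
    by_cases hq : g q = ⊥
    · rw [hq]; exact bot_le
    · have hsub : insert q {p : ℤ | g p ≠ ⊥ ∧ p < q} ⊆ S := by
        intro p hp
        rcases Set.mem_insert_iff.mp hp with rfl | hp'
        · exact hq
        · exact hp'.1
      have hcount : ({p : ℤ | g p ≠ ⊥ ∧ p < q}).ncard + 1 ≤ S.ncard := by
        have h1 : (insert q {p : ℤ | g p ≠ ⊥ ∧ p < q}).ncard =
            ({p : ℤ | g p ≠ ⊥ ∧ p < q}).ncard + 1 :=
          Set.ncard_insert_of_notMem (by simp) (hfin q)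
        have h2 : (insert q {p : ℤ | g p ≠ ⊥ ∧ p < q}).ncard ≤ S.ncard :=
          Set.ncard_le_ncard hsub hS
        omega
      exact (count _ q rfl).trans (FH_mono D hcount)
  have hmem : S.ncard ∈ {i | FH k r H D i = FH k r H D (i + 1)} := by
    simp only [Set.mem_setOf_eq, htop, FH_succ_top htop]
  exact Nat.sInf_le hmem
end

section
/- Let H̃ ≅ H ⊗ R be a minimal model with dim_k H nonzero and finite. Then dim_k H ≥ 2(ℓ(F_*(H̃)) − 1). -/
/-!
Statement 13 (Corollary 3.3): let `H̃ ≅ H ⊗ R` be a minimal model with `dim_k H` nonzero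
and finite.  Then `dim_k H ≥ 2(ℓ(F_*(H̃)) − 1)`.
-/


open MvPolynomial TensorProduct

variable (k : Type*) [Field k] (r : ℕ)
variable (H : Type*) [AddCommGroup H] [Module k H]

/-! ### Auxiliary lemmas for statement 13 -/

section St13Aux

variable {k r H}

/-- If a `k`-linear endomorphism kills `N`, its base change kills `N.baseChange`. -/
lemma st13_baseChange_killed {N : Submodule k H} {π : H →ₗ[k] H}
    (hπ : ∀ n ∈ N, π n = 0) {w : Rp k r ⊗[k] H} (hw : w ∈ N.baseChange (Rp k r)) :
    LinearMap.baseChange (Rp k r) π w = 0 := by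
  have hw' : w ∈ Submodule.span (Rp k r)
      ((N.map (TensorProduct.mk k (Rp k r) H 1) : Submodule k (Rp k r ⊗[k] H)) :
        Set (Rp k r ⊗[k] H)) := by rw [← Submodule.baseChange_eq_span]; exact hw
  refine Submodule.span_induction ?_ ?_ ?_ ?_ hw'
  · rintro w hw
    obtain ⟨n, hn, rfl⟩ := hw
    simp [TensorProduct.mk_apply, hπ n hn]
  · simp
  · intro a b _ _ ha hb; rw [map_add, ha, hb, add_zero]
  · intro f a _ ha; rw [map_smul, ha, smul_zero]

/-- If a `k`-linear endomorphism maps into `N`, its base change maps into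
`N.baseChange`. -/
lemma st13_baseChange_mem {N : Submodule k H} {π : H →ₗ[k] H}
    (hπ : ∀ x, π x ∈ N) (v : Rp k r ⊗[k] H) :
    LinearMap.baseChange (Rp k r) π v ∈ N.baseChange (Rp k r) := by
  induction v using TensorProduct.induction_on with
  | zero => simp
  | tmul f x =>
      rw [LinearMap.baseChange_tmul]
      exact Submodule.tmul_mem_baseChange_of_mem f (hπ x)
  | add a b ha hb => rw [map_add]; exact Submodule.add_mem _ ha hb

/-- `N.baseChange` is saturated: `R ⊗ (H/N)` is torsion free. -/
lemma st13_saturated {N : Submodule k H} {f : Rp k r} (hf : f ≠ 0)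
    {v : Rp k r ⊗[k] H} (hv : f • v ∈ N.baseChange (Rp k r)) :
    v ∈ N.baseChange (Rp k r) := by
  obtain ⟨C, hC⟩ := N.exists_isCompl
  set π : H →ₗ[k] H := N.subtype ∘ₗ N.linearProjOfIsCompl C hC with hπdef
  have hπmem : ∀ x, π x ∈ N := fun x => (N.linearProjOfIsCompl C hC x).2
  have hπid : ∀ n ∈ N, π n = n := fun n hn =>
    congrArg Subtype.val (Submodule.linearProjOfIsCompl_apply_left hC ⟨n, hn⟩)
  set π' : H →ₗ[k] H := LinearMap.id - π with hπ'def
  have hkill : ∀ n ∈ N, π' n = 0 := by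
    intro n hn
    simp [hπ'def, hπid n hn]
  have hzero : LinearMap.baseChange (Rp k r) π' (f • v) = 0 :=
    st13_baseChange_killed hkill hv
  rw [map_smul] at hzero
  have h0 : LinearMap.baseChange (Rp k r) π' v = 0 := by
    rcases smul_eq_zero.mp hzero with h | h
    · exact absurd h hf
    · exact h
  have hsum : π + π' = LinearMap.id := by
    rw [hπ'def]; abel
  have hdecomp : LinearMap.baseChange (Rp k r) π v
      + LinearMap.baseChange (Rp k r) π' v = v := by
    rw [← LinearMap.add_apply, ← LinearMap.baseChange_add, hsum,
      LinearMap.baseChange_id, LinearMap.id_apply]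
  rw [← hdecomp, h0, add_zero]
  exact st13_baseChange_mem hπmem v

/-- Decomposition of elements of `(p ⊔ span{x}).baseChange`. -/
lemma st13_mem_sup_span {p : Submodule k H} {x : H} {v : Rp k r ⊗[k] H}
    (hv : v ∈ (p ⊔ Submodule.span k {x}).baseChange (Rp k r)) :
    ∃ z ∈ p.baseChange (Rp k r), ∃ f : Rp k r,
      v = z + f • ((1 : Rp k r) ⊗ₜ[k] x) := by
  have hv' : v ∈ Submodule.span (Rp k r)
      (((p ⊔ Submodule.span k {x}).map (TensorProduct.mk k (Rp k r) H 1) :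
        Submodule k (Rp k r ⊗[k] H)) : Set (Rp k r ⊗[k] H)) := by rw [← Submodule.baseChange_eq_span]; exact hv
  refine Submodule.span_induction ?_ ?_ ?_ ?_ hv'
  · rintro w hw
    obtain ⟨m, hm, rfl⟩ := hw
    obtain ⟨n, hn, s, hs, rfl⟩ := Submodule.mem_sup.mp hm
    obtain ⟨c, rfl⟩ := Submodule.mem_span_singleton.mp hs
    refine ⟨(1 : Rp k r) ⊗ₜ[k] n, Submodule.tmul_mem_baseChange_of_mem 1 hn,
      algebraMap k (Rp k r) c, ?_⟩
    rw [TensorProduct.mk_apply, TensorProduct.tmul_add, TensorProduct.tmul_smul,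
      algebraMap_smul]
  · exact ⟨0, Submodule.zero_mem _, 0, by simp⟩
  · rintro a b _ _ ⟨za, hza, fa, rfl⟩ ⟨zb, hzb, fb, rfl⟩
    exact ⟨za + zb, Submodule.add_mem _ hza hzb, fa + fb, by rw [add_smul]; abel⟩
  · rintro f a _ ⟨z, hz, fz, rfl⟩
    exact ⟨f • z, Submodule.smul_mem _ f hz, f * fz, by rw [smul_add, mul_smul]⟩

/-- If `D` sends `1 ⊗ n` into `q.baseChange` for `n ∈ p`, then `D` sends
`p.baseChange` into `q.baseChange`. -/
lemma st13_D_baseChange {D : Rp k r ⊗[k] H →ₗ[Rp k r] Rp k r ⊗[k] H}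
    {p q : Submodule k H}
    (h : ∀ n ∈ p, D ((1 : Rp k r) ⊗ₜ[k] n) ∈ q.baseChange (Rp k r))
    {z : Rp k r ⊗[k] H} (hz : z ∈ p.baseChange (Rp k r)) :
    D z ∈ q.baseChange (Rp k r) := by
  have hz' : z ∈ Submodule.span (Rp k r)
      ((p.map (TensorProduct.mk k (Rp k r) H 1) : Submodule k (Rp k r ⊗[k] H)) :
        Set (Rp k r ⊗[k] H)) := by rw [← Submodule.baseChange_eq_span]; exact hz
  refine Submodule.span_induction ?_ ?_ ?_ ?_ hz'
  · rintro w hw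
    obtain ⟨n, hn, rfl⟩ := hw
    simpa using h n hn
  · simp
  · intro a b _ _ ha hb; rw [map_add]; exact Submodule.add_mem _ ha hb
  · intro f a _ ha; rw [map_smul]; exact Submodule.smul_mem _ f ha

/-- `baseChange` is monotone. -/
lemma st13_baseChange_mono {p q : Submodule k H} (h : p ≤ q) :
    p.baseChange (Rp k r) ≤ q.baseChange (Rp k r) := by
  rw [Submodule.baseChange_eq_span, Submodule.baseChange_eq_span]; exact
  Submodule.span_mono (SetLike.coe_subset_coe.mpr
    (Submodule.map_mono (f := TensorProduct.mk k (Rp k r) H 1) h))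

end St13Aux

section St13FH

variable {k r H}
variable {D : Rp k r ⊗[k] H →ₗ[Rp k r] Rp k r ⊗[k] H}

lemma st13_mem_FH_succ {i : ℕ} {x : H} :
    x ∈ FH k r H D (i + 1) ↔
      D ((1 : Rp k r) ⊗ₜ[k] x) ∈ (FH k r H D i).baseChange (Rp k r) :=
  Iff.rfl

lemma st13_FH_mono : ∀ i, FH k r H D i ≤ FH k r H D (i + 1)
  | 0 => bot_le
  | (i + 1) => by
      intro x hx
      rw [st13_mem_FH_succ] at hx ⊢
      exact st13_baseChange_mono (st13_FH_mono i) hx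

lemma st13_FH_stab {i : ℕ} (h : FH k r H D i = FH k r H D (i + 1)) :
    FH k r H D (i + 1) = FH k r H D (i + 2) := by
  show FH k r H D (i + 1) =
    Submodule.comap ((D.restrictScalars k) ∘ₗ toT k r H)
      (Submodule.restrictScalars k ((FH k r H D (i + 1)).baseChange (Rp k r)))
  rw [← h]
  exact h

/-- The key lemma: above level `1`, each strict step of the filtration below the
stable range increases the dimension by at least `2` (this is where `d̄ ∘ d̄ = 0`
is used). -/
lemma st13_key [FiniteDimensional k H] (hDD : D ∘ₗ D = 0) (j : ℕ)
    (hne : FH k r H D (j + 2) ≠ FH k r H D (j + 3)) :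
    Module.finrank k (FH k r H D (j + 1)) + 2
      ≤ Module.finrank k (FH k r H D (j + 2)) := by
  by_contra hcon
  push_neg at hcon
  have h12 : FH k r H D (j + 1) < FH k r H D (j + 2) :=
    lt_of_le_of_ne (st13_FH_mono _) fun h => hne (st13_FH_stab h)
  obtain ⟨x, hx2, hx1⟩ := SetLike.exists_of_lt h12
  have hxsup : x ∈ FH k r H D (j + 1) ⊔ Submodule.span k {x} :=
    Submodule.mem_sup_right (Submodule.mem_span_singleton_self x)
  have hxs : FH k r H D (j + 1) < FH k r H D (j + 1) ⊔ Submodule.span k {x} :=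
    lt_of_le_of_ne le_sup_left (fun h => hx1 (h.symm ▸ hxsup))
  have hle : FH k r H D (j + 1) ⊔ Submodule.span k {x} ≤ FH k r H D (j + 2) :=
    sup_le h12.le (Submodule.span_le.mpr (by simpa using hx2))
  have heq : FH k r H D (j + 1) ⊔ Submodule.span k {x} = FH k r H D (j + 2) := by
    refine Submodule.eq_of_le_of_finrank_le hle ?_
    have h1 := Submodule.finrank_lt_finrank_of_lt hxs
    omega
  obtain ⟨y, hy3, hy2⟩ :=
    SetLike.exists_of_lt (lt_of_le_of_ne (st13_FH_mono (j + 2)) hne)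
  have hy : D ((1 : Rp k r) ⊗ₜ[k] y) ∈ (FH k r H D (j + 2)).baseChange (Rp k r) :=
    st13_mem_FH_succ.mp hy3
  rw [← heq] at hy
  obtain ⟨z, hz, f, hzf⟩ := st13_mem_sup_span hy
  have hf : f ≠ 0 := by
    rintro rfl
    apply hy2
    rw [st13_mem_FH_succ, hzf]
    simpa using hz
  have hDz : D z ∈ (FH k r H D j).baseChange (Rp k r) :=
    st13_D_baseChange (fun n hn => st13_mem_FH_succ.mp hn) hz
  have hDDy : D (D ((1 : Rp k r) ⊗ₜ[k] y)) = 0 := by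
    have := LinearMap.congr_fun hDD ((1 : Rp k r) ⊗ₜ[k] y)
    simpa using this
  have hmem : f • D ((1 : Rp k r) ⊗ₜ[k] x) ∈ (FH k r H D j).baseChange (Rp k r) := by
    have h2 : D z + f • D ((1 : Rp k r) ⊗ₜ[k] x) = 0 := by
      rw [← map_smul, ← map_add, ← hzf, hDDy]
    have h3 : f • D ((1 : Rp k r) ⊗ₜ[k] x) = -D z :=
      eq_neg_of_add_eq_zero_right h2
    rw [h3]
    exact Submodule.neg_mem _ hDz
  exact hx1 (st13_mem_FH_succ.mpr (st13_saturated hf hmem))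

end St13FH

theorem statement13 (k : Type*) [Field k] (r : ℕ)
    (H : Type*) [AddCommGroup H] [Module k H]
    [FiniteDimensional k H] [Nontrivial H]
    (g : ℤ → Submodule k H) (hg : DirectSum.IsInternal g)
    (D : Rp k r ⊗[k] H →ₗ[Rp k r] Rp k r ⊗[k] H)
    (hDD : D ∘ₗ D = 0) (hdeg : DegreeOne k r H g D) (hmin : MinimalB k r H D) :
    2 * (flen k r H D - 1) ≤ Module.finrank k H := by
  classical
  set L := flen k r H D with hLdef
  have hstrict : ∀ i, i < L → FH k r H D i < FH k r H D (i + 1) := by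
    intro i hi
    refine lt_of_le_of_ne (st13_FH_mono i) fun h => ?_
    exact absurd (Nat.sInf_le h) (not_le.mpr hi)
  rcases Nat.lt_or_ge L 2 with hL2 | hL2
  · have : 2 * (L - 1) = 0 := by omega
    omega
  · have hQ : ∀ m, m + 2 ≤ L → 2 * m + 1 ≤ Module.finrank k (FH k r H D (m + 1)) := by
      intro m
      induction m with
      | zero =>
        intro h
        show 2 * 0 + 1 ≤ Module.finrank k (FH k r H D 1)
        have h01 : FH k r H D 0 < FH k r H D 1 := hstrict 0 (by omega)
        have hlt := Submodule.finrank_lt_finrank_of_lt h01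
        have hbot : Module.finrank k (FH k r H D 0) = 0 := by
          show Module.finrank k (⊥ : Submodule k H) = 0
          exact finrank_bot k H
        omega
      | succ n ih =>
        intro h
        show 2 * (n + 1) + 1 ≤ Module.finrank k (FH k r H D (n + 2))
        have hkey := st13_key hDD n (ne_of_lt (hstrict (n + 2) (by omega)))
        have hih := ih (by omega)
        omega
    have h1 := hQ (L - 2) (by omega)
    have e1 : L - 2 + 1 = L - 1 := by omega
    rw [e1] at h1
    have h2 : FH k r H D (L - 1) < FH k r H D L := by
      have := hstrict (L - 1) (by omega)
      rwa [(by omega : L - 1 + 1 = L)] at this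
    have h3 := Submodule.finrank_lt_finrank_of_lt h2
    have h4 : Module.finrank k (FH k r H D L) ≤ Module.finrank k H :=
      Submodule.finrank_le _
    omega
end
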